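/- arXiv:1104.5544 — 6 statements merged into one kernel-verified Lean document; each statement's English description precedes it below -/
import Mathlib

section
/- Let G be a graph on the vertex set {1, 2, …, n} and let m be a positive integer such that G contains no complete bipartite graph and no empty bipartite graph between two disjoint vertex sets each of size m (i.e., there are no disjoint U, V ⊆ {1,…,n} with |U| = |V| = m such that every pair (u,v) ∈ U × V is an edge of G, or no pair is). Let 𝒢 be the 3-uniform hypergraph on {1, 2, …, n} whose edges are exactly the triples (i₁, i₂, i₃) with i₁ < i₂ < i₃ such that (i₁, i₂) is an edge of G. Then 𝒢 contains no complete tripartite subgraph and no empty tripartite subgraph with three disjoint parts each of size m. -/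
/-- `e` is an edge of the 3-uniform hypergraph associated to a graph `G` on `{1, …, n}`:
the triples `{i₁, i₂, i₃}` with `i₁ < i₂ < i₃` such that `i₁i₂` is an edge of `G`. -/
def liftEdge {n : ℕ} (G : SimpleGraph (Fin n)) (e : Finset (Fin n)) : Prop :=
  ∃ i₁ i₂ i₃ : Fin n, i₁ < i₂ ∧ i₂ < i₃ ∧ e = {i₁, i₂, i₃} ∧ G.Adj i₁ i₂

lemma lift_iff {n : ℕ} (G : SimpleGraph (Fin n)) {u v w : Fin n}
    (huv : u ≠ v) (hu : u < w) (hv : v < w) :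
    liftEdge G ({u, v, w} : Finset (Fin n)) ↔ G.Adj u v := by
  constructor
  · rintro ⟨i₁, i₂, i₃, h12, h23, he, hadj⟩
    have hmem : ∀ x : Fin n, x ∈ ({u, v, w} : Finset (Fin n)) ↔ x ∈ ({i₁, i₂, i₃} : Finset (Fin n)) := by
      intro x; rw [he]
    simp only [Finset.mem_insert, Finset.mem_singleton] at hmem
    have h3 : i₃ = w := by
      have hw := (hmem w).1 (by tauto)
      have hi3 := (hmem i₃).2 (by tauto)
      rcases hw with h | h | h
      · rcases hi3 with h' | h' | h' <;> subst h' <;> omega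
      · rcases hi3 with h' | h' | h' <;> subst h' <;> omega
      · omega
    subst h3
    have h1 := (hmem i₁).2 (by tauto)
    have h2 := (hmem i₂).2 (by tauto)
    have h1' : i₁ = u ∨ i₁ = v := by rcases h1 with h | h | h <;> first | tauto | omega
    have h2' : i₂ = u ∨ i₂ = v := by rcases h2 with h | h | h <;> first | tauto | omega
    rcases h1' with rfl | rfl <;> rcases h2' with rfl | rfl
    · omega
    · exact hadj
    · exact hadj.symm
    · omega
  · intro hadj
    rcases lt_or_gt_of_ne huv with h | h
    · exact ⟨u, v, w, h, hv, rfl, hadj⟩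
    · refine ⟨v, u, w, h, hu, ?_, hadj.symm⟩
      ext x; simp only [Finset.mem_insert, Finset.mem_singleton]; tauto

/-- if a graph `G` on `{1, …, n}` contains no complete and no empty bipartite graph
between two disjoint vertex sets of size `m`, then the 3-uniform hypergraph `𝒢` whose edges are
the triples `i₁ < i₂ < i₃` with `i₁i₂` an edge of `G` contains no complete and no empty
tripartite subgraph with three disjoint parts of size `m`. -/
theorem stmt_8 (n m : ℕ) (hm : 0 < m) (G : SimpleGraph (Fin n))
    (hbip : ¬ ∃ U V : Finset (Fin n), Disjoint U V ∧ U.card = m ∧ V.card = m ∧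
      ((∀ u ∈ U, ∀ v ∈ V, G.Adj u v) ∨ (∀ u ∈ U, ∀ v ∈ V, ¬ G.Adj u v))) :
    ¬ ∃ S₁ S₂ S₃ : Finset (Fin n),
      Disjoint S₁ S₂ ∧ Disjoint S₁ S₃ ∧ Disjoint S₂ S₃ ∧
      S₁.card = m ∧ S₂.card = m ∧ S₃.card = m ∧
      ((∀ v₁ ∈ S₁, ∀ v₂ ∈ S₂, ∀ v₃ ∈ S₃, liftEdge G ({v₁, v₂, v₃} : Finset (Fin n))) ∨
       (∀ v₁ ∈ S₁, ∀ v₂ ∈ S₂, ∀ v₃ ∈ S₃, ¬ liftEdge G ({v₁, v₂, v₃} : Finset (Fin n)))) := by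
  rintro ⟨S₁, S₂, S₃, h12, h13, h23, hc1, hc2, hc3, hcase⟩
  have hne : (S₁ ∪ S₂ ∪ S₃).Nonempty := by
    have : S₁.Nonempty := Finset.card_pos.mp (hc1 ▸ hm)
    exact this.mono (by intro x hx; simp [hx])
  set w := (S₁ ∪ S₂ ∪ S₃).max' hne with hw
  have hwmem := (S₁ ∪ S₂ ∪ S₃).max'_mem hne
  have hle : ∀ x ∈ S₁ ∪ S₂ ∪ S₃, x ≤ w := fun x hx => Finset.le_max' _ x hx
  simp only [Finset.mem_union] at hwmem
  rcases hwmem with (hw1 | hw2) | hw3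
  · -- w ∈ S₁, use S₂, S₃
    apply hbip
    refine ⟨S₂, S₃, h23, hc2, hc3, ?_⟩
    have key : ∀ u ∈ S₂, ∀ v ∈ S₃,
        (liftEdge G ({w, u, v} : Finset (Fin n)) ↔ G.Adj u v) := by
      intro u hu v hv
      have huv : u ≠ v := fun h => (Finset.disjoint_left.mp h23 hu) (h ▸ hv)
      have hu' : u < w := lt_of_le_of_ne (hle u (by simp [hu]))
        (fun h => (Finset.disjoint_left.mp h12 (h ▸ hw1)) hu)
      have hv' : v < w := lt_of_le_of_ne (hle v (by simp [hv]))
        (fun h => (Finset.disjoint_left.mp h13 (h ▸ hw1)) hv)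
      have hset : ({w, u, v} : Finset (Fin n)) = {u, v, w} := by
        ext x; simp only [Finset.mem_insert, Finset.mem_singleton]; tauto
      rw [hset]; exact lift_iff G huv hu' hv'
    rcases hcase with h | h
    · exact Or.inl fun u hu v hv => (key u hu v hv).mp (h w hw1 u hu v hv)
    · exact Or.inr fun u hu v hv hadj => h w hw1 u hu v hv ((key u hu v hv).mpr hadj)
  · -- w ∈ S₂, use S₁, S₃
    apply hbip
    refine ⟨S₁, S₃, h13, hc1, hc3, ?_⟩
    have key : ∀ u ∈ S₁, ∀ v ∈ S₃,
        (liftEdge G ({u, w, v} : Finset (Fin n)) ↔ G.Adj u v) := by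
      intro u hu v hv
      have huv : u ≠ v := fun h => (Finset.disjoint_left.mp h13 hu) (h ▸ hv)
      have hu' : u < w := lt_of_le_of_ne (hle u (by simp [hu]))
        (fun h => (Finset.disjoint_left.mp h12 hu) (h ▸ hw2))
      have hv' : v < w := lt_of_le_of_ne (hle v (by simp [hv]))
        (fun h => (Finset.disjoint_left.mp h23 (h ▸ hw2)) hv)
      have hset : ({u, w, v} : Finset (Fin n)) = {u, v, w} := by
        ext x; simp only [Finset.mem_insert, Finset.mem_singleton]; tauto
      rw [hset]; exact lift_iff G huv hu' hv'
    rcases hcase with h | h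
    · exact Or.inl fun u hu v hv => (key u hu v hv).mp (h u hu w hw2 v hv)
    · exact Or.inr fun u hu v hv hadj => h u hu w hw2 v hv ((key u hu v hv).mpr hadj)
  · -- w ∈ S₃, use S₁, S₂
    apply hbip
    refine ⟨S₁, S₂, h12, hc1, hc2, ?_⟩
    have key : ∀ u ∈ S₁, ∀ v ∈ S₂,
        (liftEdge G ({u, v, w} : Finset (Fin n)) ↔ G.Adj u v) := by
      intro u hu v hv
      have huv : u ≠ v := fun h => (Finset.disjoint_left.mp h12 hu) (h ▸ hv)
      have hu' : u < w := lt_of_le_of_ne (hle u (by simp [hu]))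
        (fun h => (Finset.disjoint_left.mp h13 hu) (h ▸ hw3))
      have hv' : v < w := lt_of_le_of_ne (hle v (by simp [hv]))
        (fun h => (Finset.disjoint_left.mp h23 hv) (h ▸ hw3))
      exact lift_iff G huv hu' hv'
    rcases hcase with h | h
    · exact Or.inl fun u hu v hv => (key u hu v hv).mp (h u hu v hv w hw3)
    · exact Or.inr fun u hu v hv hadj => h u hu v hv w hw3 ((key u hu v hv).mpr hadj)
end

section
/- Let G be any graph on the vertex set {1, 2, …, n} with n ≥ 5, and let 𝒢 be the 3-uniform hypergraph on {1, 2, …, n} whose edges are exactly the triples (i₁, i₂, i₃) with i₁ < i₂ < i₃ such that (i₁, i₂) is an edge of G. Then 𝒢 contains no induced copy of the tight cycle C₅^{(3)}, the 3-uniform hypergraph with vertex set {1, 2, 3, 4, 5} and edge set {123, 234, 345, 451, 512}. -/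
/-- The edge set of the tight cycle `C₅^{(3)}` on vertex set `{0, 1, 2, 3, 4}`. -/
def tightC5 : Finset (Finset (Fin 5)) :=
  {{0, 1, 2}, {1, 2, 3}, {2, 3, 4}, {3, 4, 0}, {4, 0, 1}}

lemma sorted_triple_eq {n : ℕ} {a b c i j k : Fin n} (hab : a < b) (hbc : b < c)
    (hij : i < j) (hjk : j < k) (h : ({a,b,c} : Finset (Fin n)) = {i,j,k}) :
    a = i ∧ b = j := by
  have ha : a = i ∨ a = j ∨ a = k := by
    have := h ▸ (show a ∈ ({a,b,c} : Finset (Fin n)) by simp); simpa using this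
  have hb : b = i ∨ b = j ∨ b = k := by
    have := h ▸ (show b ∈ ({a,b,c} : Finset (Fin n)) by simp); simpa using this
  have hi : i = a ∨ i = b ∨ i = c := by
    have : i ∈ ({i,j,k} : Finset (Fin n)) := by simp
    rw [← h] at this; simpa using this
  have hj : j = a ∨ j = b ∨ j = c := by
    have : j ∈ ({i,j,k} : Finset (Fin n)) := by simp
    rw [← h] at this; simpa using this
  simp only [Fin.ext_iff, Fin.lt_def] at *
  rcases ha with h1|h1|h1 <;> rcases hb with h2|h2|h2 <;>
    rcases hi with h3|h3|h3 <;> rcases hj with h4|h4|h4 <;> omega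

lemma liftEdge_iff {n : ℕ} (G : SimpleGraph (Fin n)) {a b c : Fin n}
    (hab : a < b) (hbc : b < c) :
    liftEdge G {a, b, c} ↔ G.Adj a b := by
  constructor
  · rintro ⟨i, j, k, hij, hjk, he, hadj⟩
    obtain ⟨rfl, rfl⟩ := sorted_triple_eq hab hbc hij hjk he
    exact hadj
  · intro h; exact ⟨a, b, c, hab, hbc, rfl, h⟩

lemma tightC5_witness : ∀ x y : Fin 5, x ≠ y →
    ∃ z w : Fin 5, z ≠ x ∧ z ≠ y ∧ w ≠ x ∧ w ≠ y ∧
      ({x, y, z} : Finset (Fin 5)) ∈ tightC5 ∧ ({x, y, w} : Finset (Fin 5)) ∉ tightC5 := by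
  decide

/-- for any graph `G` on `{1, …, n}` with `n ≥ 5`, the 3-uniform hypergraph whose
edges are the triples `i₁ < i₂ < i₃` with `i₁i₂` an edge of `G` contains no induced copy of the
tight cycle `C₅^{(3)}`. -/
theorem stmt_9 (n : ℕ) (hn : 5 ≤ n) (G : SimpleGraph (Fin n)) :
    ¬ ∃ f : Fin 5 ↪ Fin n, ∀ x y z : Fin 5, x ≠ y → x ≠ z → y ≠ z →
      (liftEdge G ({f x, f y, f z} : Finset (Fin n)) ↔
        ({x, y, z} : Finset (Fin 5)) ∈ tightC5) := by
  rintro ⟨f, hf⟩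
  -- choose x with f x minimal
  obtain ⟨x, -, hx⟩ := Finset.exists_min_image Finset.univ f ⟨0, Finset.mem_univ 0⟩
  obtain ⟨y, hy_mem, hy⟩ := Finset.exists_min_image (Finset.univ.erase x) f
    ⟨if x = 0 then 1 else 0, by by_cases h : x = 0 <;> simp [h, Finset.mem_erase] <;> omega⟩
  have hxy : x ≠ y := fun h => (Finset.mem_erase.mp hy_mem).1 h.symm
  have hfxy : f x < f y :=
    lt_of_le_of_ne (hx y (Finset.mem_univ y)) (fun h => hxy (f.injective h))
  have key : ∀ z : Fin 5, z ≠ x → z ≠ y →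
      (G.Adj (f x) (f y) ↔ ({x, y, z} : Finset (Fin 5)) ∈ tightC5) := by
    intro z hzx hzy
    have hfyz : f y < f z := by
      refine lt_of_le_of_ne (hy z ?_) (fun h => hzy (f.injective h).symm)
      exact Finset.mem_erase.mpr ⟨hzx, Finset.mem_univ z⟩
    have := hf x y z hxy (fun h => hzx h.symm) (fun h => hzy h.symm)
    rwa [liftEdge_iff G hfxy hfyz] at this
  obtain ⟨z, w, hzx, hzy, hwx, hwy, hz, hw⟩ := tightC5_witness x y hxy
  exact hw ((key w hwx hwy).mp ((key z hzx hzy).mpr hz))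
end

section
/- There exists a constant c > 0 such that for every sufficiently large n there is a graph G on n vertices containing no complete bipartite graph and no empty bipartite graph between two disjoint vertex sets each of size ⌈c log n⌉; that is, there are no disjoint vertex sets U, V with |U| = |V| = ⌈c log n⌉ such that every pair (u, v) ∈ U × V is an edge of G, and none such that no pair (u, v) ∈ U × V is an edge of G. -/
open Finset

lemma count_fixed {α : Type*} [Fintype α] [DecidableEq α] (S : Finset α) (b : Bool) :
    (Finset.univ.filter (fun g : α → Bool => ∀ p ∈ S, g p = b)).card
      ≤ 2 ^ (Fintype.card α - S.card) := by
  classical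
  have h : (Finset.univ.filter (fun g : α → Bool => ∀ p ∈ S, g p = b)).card
      ≤ (Finset.univ : Finset ({p : α // p ∉ S} → Bool)).card := by
    apply Finset.card_le_card_of_injOn (fun g (p : {p : α // p ∉ S}) => g p.1)
    · intro _ _; exact Finset.mem_univ _
    · intro g₁ h₁ g₂ h₂ hgg
      simp only [Finset.mem_coe, Finset.mem_filter] at h₁ h₂
      funext p
      by_cases hp : p ∈ S
      · rw [h₁.2 p hp, h₂.2 p hp]
      · exact congrFun hgg ⟨p, hp⟩
  calc _ ≤ _ := h
    _ = 2 ^ (Fintype.card α - S.card) := by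
        rw [Finset.card_univ, Fintype.card_fun, Fintype.card_bool]
        congr 1
        rw [Fintype.card_subtype_compl, Fintype.card_coe]

lemma minmax_eq {α : Type*} [LinearOrder α] {a b c d : α}
    (h1 : min a b = min c d) (h2 : max a b = max c d) :
    (a = c ∧ b = d) ∨ (a = d ∧ b = c) := by
  rcases le_total a b with h | h <;> rcases le_total c d with h' | h' <;>
    simp [min_def, max_def, h, h'] at h1 h2 <;> tauto

lemma good_coloring (n k : ℕ) (hcount : 2 * n ^ (2 * k) < 2 ^ (k * k)) :
    ∃ g : Fin n × Fin n → Bool,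
      ¬ ∃ U V : Finset (Fin n), Disjoint U V ∧ U.card = k ∧ V.card = k ∧
        ((∀ u ∈ U, ∀ v ∈ V, g (min u v, max u v) = true) ∨
         (∀ u ∈ U, ∀ v ∈ V, g (min u v, max u v) = false)) := by
  classical
  by_cases hkn : k ≤ n
  case neg =>
    refine ⟨fun _ => true, ?_⟩
    rintro ⟨U, V, -, hU, -, -⟩
    have := Finset.card_le_card (Finset.subset_univ U)
    simp [hU, Fintype.card_fin] at this
    omega
  -- main case
  obtain ⟨bad, hbad⟩ : ∃ bad : (Fin n × Fin n → Bool) → Prop, bad = fun g =>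
    ∃ U V : Finset (Fin n), Disjoint U V ∧ U.card = k ∧ V.card = k ∧
      ((∀ u ∈ U, ∀ v ∈ V, g (min u v, max u v) = true) ∨
       (∀ u ∈ U, ∀ v ∈ V, g (min u v, max u v) = false)) := ⟨_, rfl⟩
  by_contra hcon
  push_neg at hcon
  have hall : ∀ g, bad g := fun g => by
    rw [hbad]; by_contra hg; exact hg (hcon g)
  obtain ⟨P, hP⟩ : ∃ P, P = Finset.powersetCard k (Finset.univ : Finset (Fin n)) := ⟨_, rfl⟩
  -- per pair bound
  have hpair : ∀ U V : Finset (Fin n), U.card = k → V.card = k →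
      (Finset.univ.filter (fun g : Fin n × Fin n → Bool =>
        Disjoint U V ∧
        ((∀ u ∈ U, ∀ v ∈ V, g (min u v, max u v) = true) ∨
         (∀ u ∈ U, ∀ v ∈ V, g (min u v, max u v) = false)))).card
      ≤ 2 * 2 ^ (n * n - k * k) := by
    intro U V hU hV
    by_cases hD : Disjoint U V
    case neg => simp [hD]
    obtain ⟨S, hS⟩ : ∃ S : Finset (Fin n × Fin n),
      S = (U ×ˢ V).image (fun p => (min p.1 p.2, max p.1 p.2)) := ⟨_, rfl⟩
    have hScard : S.card = k * k := by
      rw [hS, Finset.card_image_of_injOn, Finset.card_product, hU, hV]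
      rintro ⟨u, v⟩ huv ⟨u', v'⟩ huv' heq
      simp only [Finset.mem_coe, Finset.mem_product] at huv huv'
      have h1 : min u v = min u' v' := congrArg Prod.fst heq
      have h2 : max u v = max u' v' := congrArg Prod.snd heq
      rcases minmax_eq h1 h2 with ⟨e1, e2⟩ | ⟨e1, e2⟩
      · simp [e1, e2]
      · exfalso
        exact Finset.disjoint_left.mp hD huv.1 (e1 ▸ huv'.2)
    have hsub : (Finset.univ.filter (fun g : Fin n × Fin n → Bool =>
        Disjoint U V ∧
        ((∀ u ∈ U, ∀ v ∈ V, g (min u v, max u v) = true) ∨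
         (∀ u ∈ U, ∀ v ∈ V, g (min u v, max u v) = false))))
        ⊆ (Finset.univ.filter (fun g : Fin n × Fin n → Bool => ∀ p ∈ S, g p = true))
          ∪ (Finset.univ.filter (fun g : Fin n × Fin n → Bool => ∀ p ∈ S, g p = false)) := by
      intro g hg
      simp only [Finset.mem_filter, Finset.mem_univ, true_and] at hg
      rcases hg.2 with h | h
      · apply Finset.mem_union_left
        simp only [Finset.mem_filter, Finset.mem_univ, true_and]
        intro p hp
        rw [hS] at hp
        obtain ⟨⟨u, v⟩, huv, rfl⟩ := Finset.mem_image.mp hp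
        rw [Finset.mem_product] at huv
        exact h u huv.1 v huv.2
      · apply Finset.mem_union_right
        simp only [Finset.mem_filter, Finset.mem_univ, true_and]
        intro p hp
        rw [hS] at hp
        obtain ⟨⟨u, v⟩, huv, rfl⟩ := Finset.mem_image.mp hp
        rw [Finset.mem_product] at huv
        exact h u huv.1 v huv.2
    have h1 := Finset.card_le_card hsub
    have h2 := Finset.card_union_le
      (Finset.univ.filter (fun g : Fin n × Fin n → Bool => ∀ p ∈ S, g p = true))
      (Finset.univ.filter (fun g : Fin n × Fin n → Bool => ∀ p ∈ S, g p = false))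
    refine le_trans h1 (le_trans h2 ?_)
    have ht := count_fixed S true
    have hf := count_fixed S false
    rw [hScard] at ht hf
    simp only [Fintype.card_prod, Fintype.card_fin] at ht hf
    have := add_le_add ht hf
    linarith
  -- union bound
  have hBadUniv : (Finset.univ : Finset (Fin n × Fin n → Bool))
      ⊆ (P ×ˢ P).biUnion (fun UV =>
          Finset.univ.filter (fun g : Fin n × Fin n → Bool =>
            Disjoint UV.1 UV.2 ∧
            ((∀ u ∈ UV.1, ∀ v ∈ UV.2, g (min u v, max u v) = true) ∨
             (∀ u ∈ UV.1, ∀ v ∈ UV.2, g (min u v, max u v) = false)))) := by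
    intro g _
    have hg := hall g
    rw [hbad] at hg
    obtain ⟨U, V, hD, hU, hV, hm⟩ := hg
    apply Finset.mem_biUnion.mpr
    refine ⟨(U, V), ?_, ?_⟩
    · rw [Finset.mem_product]
      constructor <;> rw [hP, Finset.mem_powersetCard] <;>
        exact ⟨Finset.subset_univ _, by assumption⟩
    · simp only [Finset.mem_filter, Finset.mem_univ, true_and]
      exact ⟨hD, hm⟩
  have hcard : (2 : ℕ) ^ (n * n)
      ≤ n ^ k * n ^ k * (2 * 2 ^ (n * n - k * k)) := by
    calc (2:ℕ) ^ (n * n) = Fintype.card (Fin n × Fin n → Bool) := by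
          rw [Fintype.card_fun, Fintype.card_bool, Fintype.card_prod, Fintype.card_fin]
      _ = (Finset.univ : Finset (Fin n × Fin n → Bool)).card := (Finset.card_univ).symm
      _ ≤ _ := Finset.card_le_card hBadUniv
      _ ≤ ∑ UV ∈ P ×ˢ P, (Finset.univ.filter (fun g : Fin n × Fin n → Bool =>
            Disjoint UV.1 UV.2 ∧
            ((∀ u ∈ UV.1, ∀ v ∈ UV.2, g (min u v, max u v) = true) ∨
             (∀ u ∈ UV.1, ∀ v ∈ UV.2, g (min u v, max u v) = false)))).card :=
          Finset.card_biUnion_le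
      _ ≤ (P ×ˢ P).card * (2 * 2 ^ (n * n - k * k)) := by
          apply Finset.sum_le_card_nsmul
          rintro ⟨U, V⟩ hUV
          rw [Finset.mem_product, hP, Finset.mem_powersetCard, Finset.mem_powersetCard] at hUV
          exact hpair U V hUV.1.2 hUV.2.2
      _ ≤ n ^ k * n ^ k * (2 * 2 ^ (n * n - k * k)) := by
          apply Nat.mul_le_mul_right
          rw [Finset.card_product, hP, Finset.card_powersetCard, Finset.card_univ,
            Fintype.card_fin]
          exact Nat.mul_le_mul (Nat.choose_le_pow _ _) (Nat.choose_le_pow _ _)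
  -- contradiction with hcount
  have hkk : k * k ≤ n * n := Nat.mul_le_mul hkn hkn
  have : n ^ k * n ^ k * (2 * 2 ^ (n * n - k * k)) < 2 ^ (n * n) := by
    have h1 : n ^ k * n ^ k * (2 * 2 ^ (n * n - k * k))
        = (2 * n ^ (2 * k)) * 2 ^ (n * n - k * k) := by ring
    rw [h1]
    calc (2 * n ^ (2 * k)) * 2 ^ (n * n - k * k)
        < 2 ^ (k * k) * 2 ^ (n * n - k * k) := by
          exact mul_lt_mul_of_pos_right hcount (by positivity)
      _ = 2 ^ (n * n) := by
          rw [← pow_add]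
          congr 1
          omega
  linarith

lemma key_ineq (n : ℕ) (hn : 2 ≤ n) :
    2 * n ^ (2 * ⌈(6:ℝ) * Real.log n⌉₊) < 2 ^ (⌈(6:ℝ) * Real.log n⌉₊ * ⌈(6:ℝ) * Real.log n⌉₊) := by
  set k := ⌈(6:ℝ) * Real.log n⌉₊ with hk
  have hlogpos : 0 < Real.log n := Real.log_pos (by exact_mod_cast hn)
  have hkk : (6:ℝ) * Real.log n ≤ k := Nat.le_ceil _
  have hlog2 : (0.6931471803 : ℝ) < Real.log 2 := Real.log_two_gt_d9
  have hk5 : 5 ≤ k := by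
    have h2 : Real.log 2 ≤ Real.log n := Real.log_le_log (by norm_num) (by exact_mod_cast hn)
    have h4 : (4:ℝ) < 6 * Real.log n := by nlinarith
    have h5 : (4:ℕ) < k := Nat.lt_ceil.mpr (by exact_mod_cast h4)
    omega
  have : (2:ℝ) * (n:ℝ) ^ (2 * k) < 2 ^ (k * k) := by
    have hnpos : (0:ℝ) < n := by positivity
    have h1 : (n:ℝ) ^ (2 * k) = Real.exp ((2 * k : ℕ) * Real.log n) := by
      rw [Real.exp_nat_mul, Real.exp_log hnpos]
    have h2 : (2:ℝ) ^ (k * k) = Real.exp ((k * k : ℕ) * Real.log 2) := by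
      rw [Real.exp_nat_mul, Real.exp_log (by norm_num)]
    have h3 : (2:ℝ) * Real.exp ((2 * k : ℕ) * Real.log n)
        = Real.exp (Real.log 2 + (2 * k : ℕ) * Real.log n) := by
      rw [Real.exp_add, Real.exp_log (by norm_num : (0:ℝ) < 2)]
    rw [h1, h2, h3]
    apply Real.exp_lt_exp.mpr
    have hlogn : Real.log n ≤ (k : ℝ) / 6 := by linarith
    have hkr : (5:ℝ) ≤ k := by exact_mod_cast hk5
    push_cast
    nlinarith [mul_nonneg (by linarith : (0:ℝ) ≤ 2 * (k:ℝ))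
        (by linarith : (0:ℝ) ≤ (k:ℝ)/6 - Real.log n),
      mul_le_mul_of_nonneg_right (mul_le_mul hkr hkr (by linarith) (by linarith))
        (by linarith : (0:ℝ) ≤ Real.log 2 - 1/3)]
  exact_mod_cast this


/-- there exists `c > 0` such that for every sufficiently large `n` there is a
graph `G` on `n` vertices containing no complete and no empty bipartite graph between two
disjoint vertex sets each of size `⌈c log n⌉`. -/
theorem stmt_10 :
    ∃ c : ℝ, 0 < c ∧ ∃ N : ℕ, ∀ n : ℕ, N ≤ n →
      ∃ G : SimpleGraph (Fin n),
        ¬ ∃ U V : Finset (Fin n), Disjoint U V ∧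
          U.card = ⌈c * Real.log n⌉₊ ∧ V.card = ⌈c * Real.log n⌉₊ ∧
          ((∀ u ∈ U, ∀ v ∈ V, G.Adj u v) ∨ (∀ u ∈ U, ∀ v ∈ V, ¬ G.Adj u v)) := by
  refine ⟨6, by norm_num, 2, fun n hn => ?_⟩
  obtain ⟨g, hg⟩ := good_coloring n ⌈(6:ℝ) * Real.log n⌉₊ (key_ineq n hn)
  refine ⟨SimpleGraph.fromRel (fun i j => g (min i j, max i j) = true), ?_⟩
  rintro ⟨U, V, hD, hU, hV, hm⟩
  apply hg
  refine ⟨U, V, hD, hU, hV, ?_⟩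
  have hne : ∀ u ∈ U, ∀ v ∈ V, u ≠ v := fun u hu v hv h =>
    Finset.disjoint_left.mp hD hu (h ▸ hv)
  rcases hm with h | h
  · left
    intro u hu v hv
    have := (SimpleGraph.fromRel_adj _ u v).mp (h u hu v hv)
    rcases this.2 with h' | h'
    · exact h'
    · rwa [min_comm, max_comm] at h'
  · right
    intro u hu v hv
    cases hgb : g (min u v, max u v)
    · rfl
    · exact absurd ((SimpleGraph.fromRel_adj _ u v).mpr
        ⟨hne u hu v hv, Or.inl hgb⟩) (h u hu v hv)
end

section
/- For every k ≥ 3 there exist a finite set H with |H| ≥ k + 5 and a 2-colouring χ (red/blue) of the (k+1)-element subsets of H such that for every positive integer n and every 2-colouring c of the k-element subsets of {0, 1, …, n−1}, the step-up colouring C associated with c contains no copy of (H, χ): there is no injection f from H into {0, 1, …, 2ⁿ − 1} such that C({f(x₁), …, f(x_{k+1})}) = χ({x₁, …, x_{k+1}}) for every (k+1)-element subset {x₁, …, x_{k+1}} of H. -/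
/-- `stepDelta a b` is the largest index `i` such that the `i`-th binary digits of `a` and `b`
differ; equivalently `⌊log₂ (a XOR b)⌋`. -/
def stepDelta (a b : ℕ) : ℕ := Nat.log 2 (a ^^^ b)

/-- The list of deltas of consecutive elements of a list. -/
def deltaList : List ℕ → List ℕ
  | a :: b :: rest => stepDelta a b :: deltaList (b :: rest)
  | _ => []

/-- Given a non-monotone list, decide whether its first local extremum is a local maximum
(`true`) or a local minimum (`false`). -/
def firstExtremumIsMax : List ℕ → Bool
  | a :: b :: c :: rest =>
      if a < b ∧ c < b then true
      else if b < a ∧ b < c then false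
      else firstExtremumIsMax (b :: c :: rest)
  | _ => false

/-- The step-up colouring: given a 2-colouring `c` (red = `false`, blue = `true`) of the
`k`-element subsets of `{0, …, n-1}`, the `(k+1)`-element subset `S = {ε₁ < … < ε_{k+1}}` of
`{0, …, 2ⁿ - 1}` is coloured as follows.  Let `δᵢ = stepDelta εᵢ ε_{i+1}`.  If `δ₁, …, δ_k` is
monotone, `S` gets the colour `c {δ₁, …, δ_k}`; otherwise `S` is coloured blue if the first
local extremum of `δ₁, …, δ_k` is a local maximum, and red if it is a local minimum. -/
def stepUpColour (c : Finset ℕ → Bool) (S : Finset ℕ) : Bool :=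
  let d := deltaList (S.sort (· ≤ ·))
  if List.IsChain (· < ·) d ∨ List.IsChain (· > ·) d then c d.toFinset
  else firstExtremumIsMax d


section Bits

lemma testBit_log {x : ℕ} (hx : x ≠ 0) : x.testBit (Nat.log 2 x) = true := by
  have h1 : 2 ^ Nat.log 2 x ≤ x := Nat.pow_log_le_self 2 hx
  have h2 : x < 2 ^ (Nat.log 2 x + 1) := Nat.lt_pow_succ_log_self (by norm_num) x
  have hdiv : x / 2 ^ Nat.log 2 x = 1 := by
    have hpos : 0 < 2 ^ Nat.log 2 x := Nat.pow_pos (by norm_num)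
    have hlow : 1 ≤ x / 2 ^ Nat.log 2 x := (Nat.le_div_iff_mul_le hpos).2 (by omega)
    have hhigh : x / 2 ^ Nat.log 2 x < 2 := by
      rw [Nat.div_lt_iff_lt_mul hpos]
      have : 2 ^ (Nat.log 2 x + 1) = 2 ^ Nat.log 2 x * 2 := by ring
      omega
    omega
  rw [Nat.testBit_eq_decide_div_mod_eq, hdiv]
  norm_num

lemma testBit_ge {x i : ℕ} (h : x.testBit i = true) : 2 ^ i ≤ x := by
  by_contra hc
  push_neg at hc
  rw [Nat.testBit_lt_two_pow hc] at h
  exact Bool.false_ne_true h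

lemma testBit_above_log {x i : ℕ} (h : Nat.log 2 x < i) : x.testBit i = false := by
  apply Nat.testBit_lt_two_pow
  rcases Nat.eq_zero_or_pos x with rfl | hx
  · exact Nat.pow_pos (by norm_num)
  calc x < 2 ^ (Nat.log 2 x + 1) := Nat.lt_pow_succ_log_self (by norm_num) x
    _ ≤ 2 ^ i := Nat.pow_le_pow_right (by norm_num) h

lemma xor_ne_zero {a b : ℕ} (h : a ≠ b) : a ^^^ b ≠ 0 := fun hc => h (Nat.xor_eq_zero_iff.mp hc)

/-- At the top differing bit, the bigger number has a `1` and the smaller a `0`. -/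
lemma stepDelta_bits {a b : ℕ} (h : a < b) :
    b.testBit (stepDelta a b) = true ∧ a.testBit (stepDelta a b) = false := by
  have hx : a ^^^ b ≠ 0 := xor_ne_zero (Nat.ne_of_lt h)
  have hbit : (a ^^^ b).testBit (stepDelta a b) = true := testBit_log hx
  have habove : ∀ i, stepDelta a b < i → a.testBit i = b.testBit i := by
    intro i hi
    have h0 : (a ^^^ b).testBit i = false := testBit_above_log hi
    rw [Nat.testBit_xor] at h0
    rcases h1 : a.testBit i with _ | _ <;> rcases h2 : b.testBit i with _ | _ <;>
      simp [h1, h2] at h0 ⊢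
  have hxor : (a.testBit (stepDelta a b)).xor (b.testBit (stepDelta a b)) = true := by
    rw [← Nat.testBit_xor]; exact hbit
  rcases hb : b.testBit (stepDelta a b) with _ | _ <;>
    rcases ha : a.testBit (stepDelta a b) with _ | _ <;> rw [ha, hb] at hxor <;>
      simp at hxor
  · -- a bit true, b bit false : b < a, contradiction
    exfalso
    have : b < a := Nat.lt_of_testBit _ hb ha (fun i hi => (habove i hi).symm)
    omega
  · exact ⟨rfl, rfl⟩

lemma stepDelta_ne {a b c : ℕ} (h1 : a < b) (h2 : b < c) : stepDelta a b ≠ stepDelta b c := by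
  intro hc
  have f1 := (stepDelta_bits h1).1
  have f2 := (stepDelta_bits h2).2
  rw [hc] at f1
  rw [f1] at f2
  exact absurd f2 (by simp)

lemma log_xor {x y : ℕ} (hx : x ≠ 0) (h : Nat.log 2 x < Nat.log 2 y) :
    Nat.log 2 (x ^^^ y) = Nat.log 2 y := by
  have hy : y ≠ 0 := by
    intro hc; rw [hc] at h; simp at h
  apply Nat.log_eq_of_pow_le_of_lt_pow
  · apply testBit_ge
    rw [Nat.testBit_xor]
    have h1 : x.testBit (Nat.log 2 y) = false := testBit_above_log h
    have h2 : y.testBit (Nat.log 2 y) = true := testBit_log hy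
    rw [h1, h2]; rfl
  · apply Nat.xor_lt_two_pow
    · calc x < 2 ^ (Nat.log 2 x + 1) := Nat.lt_pow_succ_log_self (by norm_num) x
        _ ≤ 2 ^ (Nat.log 2 y + 1) := Nat.pow_le_pow_right (by norm_num) (by omega)
    · exact Nat.lt_pow_succ_log_self (by norm_num) y

lemma xor_xor_cancel (a b c : ℕ) : (a ^^^ b) ^^^ (b ^^^ c) = a ^^^ c := by
  rw [Nat.xor_assoc, ← Nat.xor_assoc b b c, Nat.xor_self, Nat.zero_xor]

lemma stepDelta_max {a b c : ℕ} (h1 : a < b) (h2 : b < c) :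
    stepDelta a c = max (stepDelta a b) (stepDelta b c) := by
  have hne := stepDelta_ne h1 h2
  have hx : a ^^^ b ≠ 0 := xor_ne_zero (Nat.ne_of_lt h1)
  have hy : b ^^^ c ≠ 0 := xor_ne_zero (Nat.ne_of_lt h2)
  have key : a ^^^ c = (a ^^^ b) ^^^ (b ^^^ c) := (xor_xor_cancel a b c).symm
  rcases lt_or_gt_of_ne hne with hlt | hgt
  · rw [max_eq_right (le_of_lt hlt)]
    show Nat.log 2 (a ^^^ c) = stepDelta b c
    rw [key]
    exact log_xor hx hlt
  · rw [max_eq_left (le_of_lt hgt)]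
    show Nat.log 2 (a ^^^ c) = stepDelta a b
    rw [key, Nat.xor_comm]
    exact log_xor hy hgt

end Bits

section Lists

open List

lemma fem_cons (a b c : ℕ) (rest : List ℕ) :
    firstExtremumIsMax (a :: b :: c :: rest) =
      if a < b ∧ c < b then true
      else if b < a ∧ b < c then false
      else firstExtremumIsMax (b :: c :: rest) := rfl

lemma deltaList_cons (a b : ℕ) (l : List ℕ) :
    deltaList (a :: b :: l) = stepDelta a b :: deltaList (b :: l) := rfl

lemma deltaList_append_singleton :
    ∀ (l : List ℕ) (hl : l ≠ []) (z : ℕ),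
      deltaList (l ++ [z]) = deltaList l ++ [stepDelta (l.getLast hl) z]
  | [], hl, z => absurd rfl hl
  | [x], _, z => rfl
  | x :: y :: t, _, z => by
    have ih := deltaList_append_singleton (y :: t) (by simp) z
    simp only [cons_append, deltaList_cons] at ih ⊢
    rw [ih]
    simp [List.getLast_cons]

lemma deltaList_chain_ne :
    ∀ (l : List ℕ), l.IsChain (· < ·) → (deltaList l).IsChain (· ≠ ·)
  | [], _ => by simp [deltaList]
  | [x], _ => by simp [deltaList]
  | [x, y], _ => by simp [deltaList]
  | x :: y :: z :: t, h => by
    rw [isChain_cons_cons] at h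
    have hyz : y < z := (isChain_cons_cons.mp h.2).1
    have ih := deltaList_chain_ne (y :: z :: t) h.2
    rw [deltaList_cons, deltaList_cons]
    rw [deltaList_cons] at ih
    exact isChain_cons_cons.mpr ⟨stepDelta_ne h.1 hyz, ih⟩

/-- a list consisting of a strictly decreasing part of length ≥ 2
followed by an ascent has first extremum a local minimum. -/
lemma fem_false :
    ∀ (p : List ℕ) (a b : ℕ) (rest : List ℕ), p ≠ [] → (p ++ [a]).IsChain (· > ·) → a < b →
      firstExtremumIsMax (p ++ a :: b :: rest) = false
  | [], _, _, _, hp, _, _ => absurd rfl hp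
  | [x], a, b, rest, _, hch, hab => by
    have hxa : a < x := by simpa using hch
    show firstExtremumIsMax (x :: a :: b :: rest) = false
    rw [fem_cons, if_neg (by omega), if_pos (by omega)]
  | x :: y :: p', a, b, rest, _, hch, hab => by
    simp only [cons_append, isChain_cons_cons] at hch
    have hxy : x > y := hch.1
    have hch' : ((y :: p') ++ [a]).IsChain (· > ·) := by simpa using hch.2
    have ih := fem_false (y :: p') a b rest (by simp) hch' hab
    show firstExtremumIsMax (x :: y :: (p' ++ a :: b :: rest)) = false
    rcases p' with _ | ⟨z, p''⟩
    · have hya : a < y := by simpa using hch.2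
      simp only [nil_append]
      rw [fem_cons, if_neg (by omega), if_neg (by omega)]
      simpa using ih
    · have hyz : y > z := by
        have := hch.2
        simp only [cons_append, isChain_cons_cons] at this
        exact this.1
      simp only [cons_append]
      rw [fem_cons, if_neg (by omega), if_neg (by omega)]
      simpa using ih

lemma not_chain_lt (p : List ℕ) (a b : ℕ) (rest : List ℕ) (hp : p ≠ [])
    (hch : (p ++ [a]).IsChain (· > ·)) :
    ¬ (p ++ a :: b :: rest).IsChain (· < ·) := by
  intro hc
  rcases p with _ | ⟨x, p'⟩
  · exact hp rfl
  rcases p' with _ | ⟨y, p''⟩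
  · have h1 : a < x := by simpa using hch
    have h2 : x < a := by
      simp only [cons_append, nil_append, isChain_cons_cons] at hc
      exact hc.1
    omega
  · have h1 : x > y := by
      simp only [cons_append, isChain_cons_cons] at hch
      exact hch.1
    have h2 : x < y := by
      simp only [cons_append, isChain_cons_cons] at hc
      exact hc.1
    omega

lemma not_chain_gt (p : List ℕ) (a b : ℕ) (rest : List ℕ) (hab : a < b) :
    ¬ (p ++ a :: b :: rest).IsChain (· > ·) := by
  intro hc
  have h1 := (List.isChain_append.mp hc).2.1
  have : a > b := (isChain_cons_cons.mp h1).1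
  omega

/-- dichotomy: a list with adjacent-distinct entries is either strictly decreasing,
or splits as a decreasing prefix followed by a strict ascent. -/
lemma asc_split :
    ∀ (l : List ℕ), l.IsChain (· ≠ ·) →
      l.IsChain (· > ·) ∨ ∃ p g g' r, l = p ++ g :: g' :: r ∧ (p ++ [g]).IsChain (· > ·) ∧ g < g'
  | [], _ => Or.inl (by simp)
  | [x], _ => Or.inl (by simp)
  | x :: y :: t, h => by
    have hxy : x ≠ y := (isChain_cons_cons.mp h).1
    rcases lt_or_gt_of_ne hxy with hlt | hgt
    · exact Or.inr ⟨[], x, y, t, by simp, by simp, hlt⟩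
    · rcases asc_split (y :: t) (isChain_cons_cons.mp h).2 with hc | ⟨p, g, g', r, heq, hch, hgg⟩
      · exact Or.inl (isChain_cons_cons.mpr ⟨hgt, hc⟩)
      · refine Or.inr ⟨x :: p, g, g', r, by simp [heq], ?_, hgg⟩
        have hhd : (p ++ g :: g' :: r).head? = some y := by rw [← heq]; rfl
        show (x :: (p ++ [g])).IsChain (· > ·)
        rw [List.isChain_cons]
        refine ⟨?_, hch⟩
        intro z hz
        rcases p with _ | ⟨w, p'⟩
        · simp at hz hhd
          omega
        · simp at hz hhd
          omega

end Lists

section Core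

open List

def core (c : Finset ℕ → Bool) (d : List ℕ) : Bool :=
  if d.IsChain (· < ·) ∨ d.IsChain (· > ·) then c d.toFinset else firstExtremumIsMax d

lemma core_red (c : Finset ℕ → Bool) (p : List ℕ) (a b : ℕ) (rest : List ℕ)
    (hp : p ≠ []) (hch : (p ++ [a]).IsChain (· > ·)) (hab : a < b) :
    core c (p ++ a :: b :: rest) = false := by
  unfold core
  rw [if_neg, fem_false p a b rest hp hch hab]
  push_neg
  exact ⟨not_chain_lt p a b rest hp hch, not_chain_gt p a b rest hab⟩

lemma chain_gt_head {x y : ℕ} {l : List ℕ} (h : (x :: l).IsChain (· > ·)) (hyx : y > x) :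
    (y :: l).IsChain (· > ·) := by
  rw [List.isChain_cons] at h ⊢
  exact ⟨fun z hz => lt_trans (h.1 z hz) hyx, h.2⟩

/-- THE UNIVERSAL LEMMA about step-up colourings: for elements
`A < B < ms < X < Y`, if the colours of the delta lists obtained by removing `A` resp. `B`
differ, then the colours obtained by removing `X` resp. `Y` agree. -/
lemma UL (c : Finset ℕ → Bool) (A B X Y : ℕ) (ms : List ℕ) (hms : ms ≠ [])
    (hch : (A :: B :: (ms ++ [X, Y])).IsChain (· < ·)) :
    core c (deltaList (B :: (ms ++ [X, Y]))) ≠ core c (deltaList (A :: (ms ++ [X, Y]))) →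
    core c (deltaList (A :: B :: (ms ++ [Y]))) = core c (deltaList (A :: B :: (ms ++ [X]))) := by
  intro hyp
  -- extract element inequalities
  rcases ms with _ | ⟨m₁, ms'⟩
  · exact absurd rfl hms
  have hch0 := List.isChain_cons_cons.mp hch
  have hAB : A < B := hch0.1
  have hch1 : (B :: ((m₁ :: ms') ++ [X, Y])).IsChain (· < ·) := hch0.2
  have hch1' : B < m₁ ∧ (m₁ :: (ms' ++ [X, Y])).IsChain (· < ·) :=
    List.isChain_cons_cons.mp (by simpa using hch1)
  have hBm : B < m₁ := hch1'.1
  have hch2 : ((m₁ :: ms') ++ [X, Y]).IsChain (· < ·) := by simpa using hch1'.2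
  have hsplit := List.isChain_append.mp hch2
  have hXY : X < Y := by
    have := hsplit.2.1
    exact (List.isChain_cons_cons.mp this).1
  set mbar := (m₁ :: ms').getLast (by simp) with hmbar
  have hmX : mbar < X := by
    have h2 := hsplit.2.2
    have hlast : (m₁ :: ms').getLast? = some mbar := List.getLast?_eq_getLast (by simp)
    apply h2
    · rw [hlast]; exact Option.mem_some_iff.mpr rfl
    · exact Option.mem_some_iff.mpr rfl
  -- delta abbreviations
  set D := deltaList (m₁ :: ms') with hD
  set u := stepDelta mbar X with hu
  set w := stepDelta X Y with hw
  set b₀ := stepDelta B m₁ with hb₀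
  set a₀ := stepDelta A B with ha₀
  -- delta list computations
  have dlmsX : deltaList ((m₁ :: ms') ++ [X]) = D ++ [u] :=
    deltaList_append_singleton (m₁ :: ms') (by simp) X
  have dlmsY : deltaList ((m₁ :: ms') ++ [Y]) = D ++ [stepDelta mbar Y] :=
    deltaList_append_singleton (m₁ :: ms') (by simp) Y
  have dlmsXY : deltaList ((m₁ :: ms') ++ [X, Y]) = D ++ [u, w] := by
    have h1 : (m₁ :: ms') ++ [X, Y] = ((m₁ :: ms') ++ [X]) ++ [Y] := by simp
    rw [h1, deltaList_append_singleton ((m₁ :: ms') ++ [X]) (by simp) Y]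
    have h2 : ((m₁ :: ms') ++ [X]).getLast (by simp) = X := by
      simp [List.getLast_append]
    rw [h2, dlmsX]
    simp [hw]
  have dl₁ : deltaList (B :: ((m₁ :: ms') ++ [X, Y])) = b₀ :: (D ++ [u, w]) := by
    show deltaList (B :: m₁ :: (ms' ++ [X, Y])) = _
    rw [deltaList_cons]
    have : (m₁ :: (ms' ++ [X, Y])) = (m₁ :: ms') ++ [X, Y] := by simp
    rw [this, dlmsXY]
  have dl₂ : deltaList (A :: ((m₁ :: ms') ++ [X, Y])) = stepDelta A m₁ :: (D ++ [u, w]) := by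
    show deltaList (A :: m₁ :: (ms' ++ [X, Y])) = _
    rw [deltaList_cons]
    have : (m₁ :: (ms' ++ [X, Y])) = (m₁ :: ms') ++ [X, Y] := by simp
    rw [this, dlmsXY]
  have dl₃ : deltaList (A :: B :: ((m₁ :: ms') ++ [Y])) =
      a₀ :: b₀ :: (D ++ [stepDelta mbar Y]) := by
    show deltaList (A :: B :: m₁ :: (ms' ++ [Y])) = _
    rw [deltaList_cons, deltaList_cons]
    have : (m₁ :: (ms' ++ [Y])) = (m₁ :: ms') ++ [Y] := by simp
    rw [this, dlmsY]
  have dl₄ : deltaList (A :: B :: ((m₁ :: ms') ++ [X])) = a₀ :: b₀ :: (D ++ [u]) := by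
    show deltaList (A :: B :: m₁ :: (ms' ++ [X])) = _
    rw [deltaList_cons, deltaList_cons]
    have : (m₁ :: (ms' ++ [X])) = (m₁ :: ms') ++ [X] := by simp
    rw [this, dlmsX]
  have humax : stepDelta mbar Y = max u w := stepDelta_max hmX hXY
  have hamax : stepDelta A m₁ = max a₀ b₀ := stepDelta_max hAB hBm
  have hune : u ≠ w := stepDelta_ne hmX hXY
  have habne : a₀ ≠ b₀ := stepDelta_ne hAB hBm
  rcases lt_or_gt_of_ne hune with huw | huw
  swap
  · -- u > w : removing X or Y gives the same delta list
    rw [dl₃, dl₄, humax, max_eq_left (le_of_lt huw)]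
  -- u < w
  rcases lt_or_gt_of_ne habne with hab' | hab'
  · -- a₀ < b₀ : L₁ and L₂ have the same delta list, contradiction
    exfalso
    apply hyp
    rw [dl₁, dl₂, hamax, max_eq_right (le_of_lt hab')]
  -- a₀ > b₀
  by_cases hdec : (b₀ :: (D ++ [u])).IsChain (· > ·)
  · -- decreasing: L₁ and L₂ are both red, contradiction
    exfalso
    apply hyp
    have e₁ : core c (deltaList (B :: ((m₁ :: ms') ++ [X, Y]))) = false := by
      rw [dl₁]
      have hsh : b₀ :: (D ++ [u, w]) = (b₀ :: D) ++ u :: w :: [] := by simp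
      rw [hsh]
      apply core_red c (b₀ :: D) u w [] (by simp) (by simpa using hdec) huw
    have e₂ : core c (deltaList (A :: ((m₁ :: ms') ++ [X, Y]))) = false := by
      rw [dl₂, hamax, max_eq_left (le_of_lt hab')]
      have hsh : a₀ :: (D ++ [u, w]) = (a₀ :: D) ++ u :: w :: [] := by simp
      rw [hsh]
      apply core_red c (a₀ :: D) u w [] (by simp) ?_ huw
      have : (a₀ :: (D ++ [u])).IsChain (· > ·) := chain_gt_head hdec hab'
      simpa using this
    rw [e₁, e₂]
  · -- there is an ascent in b₀ :: D ++ [u]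
    have hchBX : (B :: ((m₁ :: ms') ++ [X])).IsChain (· < ·) := by
      apply List.IsChain.sublist hch1
      apply List.Sublist.cons₂
      have : (m₁ :: ms') ++ [X] <+ (m₁ :: ms') ++ [X, Y] := by
        apply List.Sublist.append_left
        simp
      exact this
    have hne : (b₀ :: (D ++ [u])).IsChain (· ≠ ·) := by
      have h1 : deltaList (B :: ((m₁ :: ms') ++ [X])) = b₀ :: (D ++ [u]) := by
        show deltaList (B :: m₁ :: (ms' ++ [X])) = _
        rw [deltaList_cons]
        have : (m₁ :: (ms' ++ [X])) = (m₁ :: ms') ++ [X] := by simp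
        rw [this, dlmsX]
      rw [← h1]
      exact deltaList_chain_ne _ hchBX
    rcases asc_split _ hne with hc | ⟨p, g, g', r, heq, hpg, hgg⟩
    · exact absurd hc hdec
    -- show L₃ and L₄ both red
    rcases List.eq_nil_or_concat r with rfl | ⟨r', z, rfl⟩
    · -- r = [] : ascent at the very end, g' = u, p ++ [g] = b₀ :: D
      have heq2 : (p ++ [g]) ++ [g'] = (b₀ :: D) ++ [u] := by
        simpa using heq.symm
      have hg' : g' = u := by
        have h1 := congrArg (fun l => l.getLast?) heq2
        simp only [List.getLast?_concat] at h1
        exact Option.some_injective _ h1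
      have hpgD : p ++ [g] = b₀ :: D := by
        have h1 := congrArg List.dropLast heq2
        simpa only [List.dropLast_concat] using h1
      have hgu : g < u := hg' ▸ hgg
      have hchain : (a₀ :: (p ++ [g])).IsChain (· > ·) := by
        rw [hpgD]
        exact List.isChain_cons_cons.mpr ⟨hab', by rw [← hpgD]; exact hpg⟩
      have e₃ : core c (deltaList (A :: B :: ((m₁ :: ms') ++ [Y]))) = false := by
        rw [dl₃, humax, max_eq_right (le_of_lt huw)]
        have hsh : a₀ :: b₀ :: (D ++ [w]) = (a₀ :: p) ++ g :: w :: [] := by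
          have : a₀ :: b₀ :: (D ++ [w]) = a₀ :: ((b₀ :: D) ++ [w]) := by simp
          rw [this, ← hpgD]; simp
        rw [hsh]
        exact core_red c (a₀ :: p) g w [] (by simp) (by simpa using hchain) (lt_trans hgu huw)
      have e₄ : core c (deltaList (A :: B :: ((m₁ :: ms') ++ [X]))) = false := by
        rw [dl₄]
        have hsh : a₀ :: b₀ :: (D ++ [u]) = (a₀ :: p) ++ g :: u :: [] := by
          have : a₀ :: b₀ :: (D ++ [u]) = a₀ :: ((b₀ :: D) ++ [u]) := by simp
          rw [this, ← hpgD]; simp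
        rw [hsh]
        exact core_red c (a₀ :: p) g u [] (by simp) (by simpa using hchain) hgu
      rw [e₃, e₄]
    · -- r = r' ++ [z] : ascent inside b₀ :: D
      have heq2 : (p ++ g :: g' :: r') ++ [z] = (b₀ :: D) ++ [u] := by
        simpa using heq.symm
      have hpgD : p ++ g :: g' :: r' = b₀ :: D := by
        have h1 := congrArg List.dropLast heq2
        simpa only [List.dropLast_concat] using h1
      have hhead : (p ++ [g]).head? = some b₀ := by
        have h1 : (p ++ g :: g' :: r').head? = some b₀ := by rw [hpgD]; rfl
        rcases p with _ | ⟨q, p'⟩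
        · simpa using h1
        · simpa using h1
      have hchain : (a₀ :: (p ++ [g])).IsChain (· > ·) := by
        rw [List.isChain_cons]
        refine ⟨?_, hpg⟩
        intro z' hz'
        rw [hhead] at hz'
        simp at hz'
        omega
      have e₃ : core c (deltaList (A :: B :: ((m₁ :: ms') ++ [Y]))) = false := by
        rw [dl₃, humax, max_eq_right (le_of_lt huw)]
        have hsh : a₀ :: b₀ :: (D ++ [w]) = (a₀ :: p) ++ g :: g' :: (r' ++ [w]) := by
          have h1 : a₀ :: b₀ :: (D ++ [w]) = a₀ :: ((b₀ :: D) ++ [w]) := by simp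
          rw [h1, ← hpgD]; simp
        rw [hsh]
        exact core_red c (a₀ :: p) g g' (r' ++ [w]) (by simp) (by simpa using hchain) hgg
      have e₄ : core c (deltaList (A :: B :: ((m₁ :: ms') ++ [X]))) = false := by
        rw [dl₄]
        have hsh : a₀ :: b₀ :: (D ++ [u]) = (a₀ :: p) ++ g :: g' :: (r' ++ [u]) := by
          have h1 : a₀ :: b₀ :: (D ++ [u]) = a₀ :: ((b₀ :: D) ++ [u]) := by simp
          rw [h1, ← hpgD]; simp
        rw [hsh]
        exact core_red c (a₀ :: p) g g' (r' ++ [u]) (by simp) (by simpa using hchain) hgg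
      rw [e₃, e₄]

end Core

section Parity

open Finset

/-- indicator of the `i`-th bit, in `ZMod 2`. -/
def tb (x i : ℕ) : ZMod 2 := if x.testBit i then 1 else 0

/-- bilinear form: parity of the number of common bits among the first `d`. -/
def bform (d x y : ℕ) : ZMod 2 := ∑ i ∈ Finset.range d, tb x i * tb y i

lemma tb_xor (x y i : ℕ) : tb (x ^^^ y) i = tb x i + tb y i := by
  unfold tb
  rw [Nat.testBit_xor]
  rcases h1 : x.testBit i with _ | _ <;> rcases h2 : y.testBit i with _ | _ <;> simp <;> decide

lemma bform_comm (d x y : ℕ) : bform d x y = bform d y x := by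
  unfold bform
  exact Finset.sum_congr rfl fun i _ => mul_comm _ _

lemma bform_xor_left (d x y z : ℕ) : bform d (x ^^^ y) z = bform d x z + bform d y z := by
  unfold bform
  rw [← Finset.sum_add_distrib]
  exact Finset.sum_congr rfl fun i _ => by rw [tb_xor, add_mul]

lemma bform_xor_right (d x y z : ℕ) : bform d z (x ^^^ y) = bform d z x + bform d z y := by
  rw [bform_comm, bform_xor_left, bform_comm d x z, bform_comm d y z]

lemma bform_zero_right (d γ : ℕ) : bform d γ 0 = 0 := by
  unfold bform
  apply Finset.sum_eq_zero
  intro i _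
  unfold tb
  rw [Nat.zero_testBit]
  simp

lemma bform_two_pow (d γ p : ℕ) (hp : p < d) : bform d γ (2 ^ p) = tb γ p := by
  unfold bform
  rw [Finset.sum_eq_single p]
  · unfold tb
    rw [Nat.testBit_two_pow]
    simp
  · intro i _ hip
    unfold tb
    rw [Nat.testBit_two_pow]
    simp [Ne.symm hip]
  · intro hcon
    exact absurd (Finset.mem_range.mpr hp) hcon

lemma log_lt_of_lt_pow {γ d : ℕ} (hγ : γ ≠ 0) (h : γ < 2 ^ d) : Nat.log 2 γ < d := by
  by_contra hc
  push_neg at hc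
  have := Nat.pow_log_le_self 2 hγ
  have h2 : (2:ℕ) ^ d ≤ 2 ^ Nat.log 2 γ := Nat.pow_le_pow_right (by norm_num) hc
  omega

lemma tb_log_one {γ : ℕ} (hγ : γ ≠ 0) : tb γ (Nat.log 2 γ) = 1 := by
  unfold tb
  rw [testBit_log hγ]
  simp

lemma zmod_aux1 : ∀ a b t : ZMod 2, (a + b * t) * 1 + b * t = a := by decide

lemma zmod_aux2 : ∀ x b : ZMod 2, x * 0 + b * 1 = b := by decide

/-- the linear functional given by a nonzero `γ < 2^d` is onto. -/
lemma bform_surj_single {γ d : ℕ} (hγ : γ ≠ 0) (h : γ < 2 ^ d) (ε : ZMod 2) :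
    ∃ s, s < 2 ^ d ∧ bform d γ s = ε := by
  by_cases hε : ε = 1
  · refine ⟨2 ^ Nat.log 2 γ, Nat.pow_lt_pow_right (by norm_num) (log_lt_of_lt_pow hγ h), ?_⟩
    rw [bform_two_pow _ _ _ (log_lt_of_lt_pow hγ h), tb_log_one hγ, hε]
  · have hε0 : ε = 0 := by revert hε; revert ε; decide
    exact ⟨0, Nat.pow_pos (by norm_num), by rw [bform_zero_right, hε0]⟩

lemma surj_aux {γ γ' : ℕ} (d p q : ℕ) (hpd : p < d) (hqd : q < d)
    (h1 : tb γ p = 1) (h2 : tb γ' p = 0) (h3 : tb γ' q = 1) (ε ε' : ZMod 2) :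
    ∃ s, s < 2 ^ d ∧ bform d γ s = ε ∧ bform d γ' s = ε' := by
  set t := tb γ q with ht
  set A : ℕ := if ε + ε' * t = 1 then 2 ^ p else 0 with hA
  set B : ℕ := if ε' = 1 then 2 ^ q else 0 with hB
  have hAd : A < 2 ^ d := by
    rw [hA]; split
    · exact Nat.pow_lt_pow_right (by norm_num) hpd
    · exact Nat.pow_pos (by norm_num)
  have hBd : B < 2 ^ d := by
    rw [hB]; split
    · exact Nat.pow_lt_pow_right (by norm_num) hqd
    · exact Nat.pow_pos (by norm_num)
  refine ⟨A ^^^ B, Nat.xor_lt_two_pow hAd hBd, ?_, ?_⟩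
  · have eA : bform d γ A = (ε + ε' * t) * tb γ p := by
      rw [hA]; split
      · rename_i hcond
        rw [bform_two_pow _ _ _ hpd, hcond, one_mul]
      · rename_i hcond
        have : ε + ε' * t = 0 := by revert hcond; generalize ε + ε' * t = x; revert x; decide
        rw [bform_zero_right, this, zero_mul]
    have eB : bform d γ B = ε' * tb γ q := by
      rw [hB]; split
      · rename_i hcond
        rw [bform_two_pow _ _ _ hqd, hcond, one_mul]
      · rename_i hcond
        have : ε' = 0 := by revert hcond; generalize ε' = x; revert x; decide
        rw [bform_zero_right, this, zero_mul]
    rw [bform_xor_right, eA, eB, h1]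
    exact zmod_aux1 ε ε' t
  · have eA : bform d γ' A = (ε + ε' * t) * tb γ' p := by
      rw [hA]; split
      · rename_i hcond
        rw [bform_two_pow _ _ _ hpd, hcond, one_mul]
      · rename_i hcond
        have : ε + ε' * t = 0 := by revert hcond; generalize ε + ε' * t = x; revert x; decide
        rw [bform_zero_right, this, zero_mul]
    have eB : bform d γ' B = ε' * tb γ' q := by
      rw [hB]; split
      · rename_i hcond
        rw [bform_two_pow _ _ _ hqd, hcond, one_mul]
      · rename_i hcond
        have : ε' = 0 := by revert hcond; generalize ε' = x; revert x; decide
        rw [bform_zero_right, this, zero_mul]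
    rw [bform_xor_right, eA, eB, h2, h3]
    exact zmod_aux2 (ε + ε' * t) ε'


/-- two distinct nonzero functionals: jointly onto. -/
lemma bform_surj_pair {γ₁ γ₂ d : ℕ} (hγ₁ : γ₁ ≠ 0) (hγ₂ : γ₂ ≠ 0)
    (h1 : γ₁ < 2 ^ d) (h2 : γ₂ < 2 ^ d) (hne : γ₁ ≠ γ₂) (ε₁ ε₂ : ZMod 2) :
    ∃ s, s < 2 ^ d ∧ bform d γ₁ s = ε₁ ∧ bform d γ₂ s = ε₂ := by
  have hx : γ₁ ^^^ γ₂ ≠ 0 := xor_ne_zero hne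
  have hpd : Nat.log 2 (γ₁ ^^^ γ₂) < d := log_lt_of_lt_pow hx (Nat.xor_lt_two_pow h1 h2)
  set p := Nat.log 2 (γ₁ ^^^ γ₂) with hp
  have hsum : tb γ₁ p + tb γ₂ p = 1 := by
    rw [← tb_xor, hp]
    exact tb_log_one hx
  have hcases : (tb γ₁ p = 1 ∧ tb γ₂ p = 0) ∨ (tb γ₁ p = 0 ∧ tb γ₂ p = 1) := by
    revert hsum
    generalize tb γ₁ p = a
    generalize tb γ₂ p = b
    revert a b
    decide
  rcases hcases with ⟨ha, hb⟩ | ⟨ha, hb⟩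
  · -- use q := log γ₂
    have hqd : Nat.log 2 γ₂ < d := log_lt_of_lt_pow hγ₂ h2
    exact surj_aux d p (Nat.log 2 γ₂) hpd hqd ha hb (tb_log_one hγ₂) ε₁ ε₂
  · have hqd : Nat.log 2 γ₁ < d := log_lt_of_lt_pow hγ₁ h1
    obtain ⟨s, hs, e2, e1⟩ := surj_aux d p (Nat.log 2 γ₁) hpd hqd hb ha (tb_log_one hγ₁) ε₂ ε₁
    exact ⟨s, hs, e1, e2⟩

end Parity

section Cells

open Finset

lemma zmod_aux3 : ∀ a x : ZMod 2, a + x + x = a := by decide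
lemma zmod_ne0 : ∀ x : ZMod 2, (¬ x = 0) ↔ x = 1 := by decide
lemma zmod_cases : ∀ ε : ZMod 2, ε = 0 ∨ ε = 1 := by decide

variable {d : ℕ}

def cell (d : ℕ) (γ₁ γ₂ : ℕ) (ε₁ ε₂ : ZMod 2) : Finset (Fin (2^d)) :=
  Finset.univ.filter (fun t => bform d γ₁ t.val = ε₁ ∧ bform d γ₂ t.val = ε₂)

lemma cell_card_translate (γ₁ γ₂ : ℕ) (ε₁ ε₂ : ZMod 2) (s : ℕ) (hs : s < 2^d) :
    (cell d γ₁ γ₂ ε₁ ε₂).card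
      = (cell d γ₁ γ₂ (ε₁ + bform d γ₁ s) (ε₂ + bform d γ₂ s)).card := by
  apply Finset.card_bij'
    (i := fun t _ => (⟨t.val ^^^ s, Nat.xor_lt_two_pow t.isLt hs⟩ : Fin (2^d)))
    (j := fun t _ => (⟨t.val ^^^ s, Nat.xor_lt_two_pow t.isLt hs⟩ : Fin (2^d)))
  · intro t ht
    simp only [cell, Finset.mem_filter, Finset.mem_univ, true_and] at ht ⊢
    rw [bform_xor_right, bform_xor_right, ht.1, ht.2]
    exact ⟨rfl, rfl⟩
  · intro t ht
    simp only [cell, Finset.mem_filter, Finset.mem_univ, true_and] at ht ⊢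
    rw [bform_xor_right, bform_xor_right, ht.1, ht.2]
    exact ⟨zmod_aux3 _ _, zmod_aux3 _ _⟩
  · intro t ht
    apply Fin.ext
    simp [xor_cancel_right]
  · intro t ht
    apply Fin.ext
    simp [xor_cancel_right]

lemma cell_pair_split (γ₁ γ₂ : ℕ) (ε₁ : ZMod 2) :
    (Finset.univ.filter (fun t : Fin (2^d) => bform d γ₁ t.val = ε₁)).card
      = (cell d γ₁ γ₂ ε₁ 0).card + (cell d γ₁ γ₂ ε₁ 1).card := by
  have h := Finset.card_filter_add_card_filter_not
    (s := Finset.univ.filter (fun t : Fin (2^d) => bform d γ₁ t.val = ε₁))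
    (p := fun t => bform d γ₂ t.val = 0)
  rw [Finset.filter_filter, Finset.filter_filter] at h
  have e1 : (Finset.univ.filter fun t : Fin (2^d) =>
      bform d γ₁ t.val = ε₁ ∧ bform d γ₂ t.val = 0) = cell d γ₁ γ₂ ε₁ 0 := rfl
  have e2 : (Finset.univ.filter fun t : Fin (2^d) =>
      bform d γ₁ t.val = ε₁ ∧ ¬ bform d γ₂ t.val = 0) = cell d γ₁ γ₂ ε₁ 1 := by
    apply Finset.filter_congr
    intro t _
    simp [zmod_ne0]
  rw [e1, e2] at h
  omega

lemma univ_split (γ₁ : ℕ) :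
    (2:ℕ)^d = (Finset.univ.filter (fun t : Fin (2^d) => bform d γ₁ t.val = 0)).card
      + (Finset.univ.filter (fun t : Fin (2^d) => bform d γ₁ t.val = 1)).card := by
  have h := Finset.card_filter_add_card_filter_not
    (s := (Finset.univ : Finset (Fin (2^d))))
    (p := fun t => bform d γ₁ t.val = 0)
  have e2 : (Finset.univ.filter fun t : Fin (2^d) => ¬ bform d γ₁ t.val = 0)
      = (Finset.univ.filter fun t : Fin (2^d) => bform d γ₁ t.val = 1) := by
    apply Finset.filter_congr
    intro t _
    simp [zmod_ne0]
  rw [e2] at h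
  rw [h, Finset.card_univ, Fintype.card_fin]

/-- diagonal cells are large. -/
lemma diag_cell_card (hd : 2 ≤ d) {γ₁ γ₂ : ℕ} (hγ₁ : γ₁ ≠ 0) (hγ₂ : γ₂ ≠ 0)
    (h1 : γ₁ < 2^d) (h2 : γ₂ < 2^d) (ε : ZMod 2) :
    2^(d-2) ≤ (cell d γ₁ γ₂ ε ε).card := by
  by_cases hne : γ₁ = γ₂
  · -- one functional: diagonal cells have size 2^(d-1)
    subst hne
    obtain ⟨s, hs, hbs⟩ := bform_surj_single hγ₁ h1 1
    have htr := cell_card_translate (d := d) γ₁ γ₁ 0 0 s hs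
    rw [hbs] at htr
    have hempty : ∀ ε₁ ε₂ : ZMod 2, ε₁ ≠ ε₂ → (cell d γ₁ γ₁ ε₁ ε₂) = ∅ := by
      intro ε₁ ε₂ hne'
      apply Finset.eq_empty_iff_forall_notMem.mpr
      intro t ht
      simp only [cell, Finset.mem_filter] at ht
      apply hne'
      rw [← ht.2.1, ← ht.2.2]
    have hsplit0 := cell_pair_split (d := d) γ₁ γ₁ 0
    have hsplit1 := cell_pair_split (d := d) γ₁ γ₁ 1
    have huniv := univ_split (d := d) γ₁
    rw [hsplit0, hsplit1] at huniv
    rw [hempty 0 1 (by decide), hempty 1 0 (by decide)] at huniv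
    simp only [Finset.card_empty] at huniv
    -- huniv : 2^d = card (cell 0 0) + 0 + (0 + card (cell 1 1))
    -- htr : card (cell 0 0) = card (cell (0+1) (0+1)) = card (cell 1 1)
    have h01 : (0:ZMod 2) + 1 = 1 := by decide
    rw [h01] at htr
    have hpow : (2:ℕ)^d = 2^(d-2) * 4 := by
      have h4 : (4:ℕ) = 2^2 := by norm_num
      rw [h4, ← pow_add]
      congr 1
      omega
    have hcard : 2 * (cell d γ₁ γ₁ 1 1).card = 2^d := by omega
    have hge : 2^(d-2) ≤ (cell d γ₁ γ₁ 1 1).card := by omega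
    rcases zmod_cases ε with rfl | rfl
    · omega
    · omega
  · -- two independent functionals: all four cells have size 2^(d-2)
    obtain ⟨s10, hs10, e10a, e10b⟩ := bform_surj_pair hγ₁ hγ₂ h1 h2 hne 1 0
    obtain ⟨s01, hs01, e01a, e01b⟩ := bform_surj_pair hγ₁ hγ₂ h1 h2 hne 0 1
    obtain ⟨s11, hs11, e11a, e11b⟩ := bform_surj_pair hγ₁ hγ₂ h1 h2 hne 1 1
    have t10 := cell_card_translate (d := d) γ₁ γ₂ 0 0 s10 hs10
    rw [e10a, e10b] at t10
    have t01 := cell_card_translate (d := d) γ₁ γ₂ 0 0 s01 hs01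
    rw [e01a, e01b] at t01
    have t11 := cell_card_translate (d := d) γ₁ γ₂ 0 0 s11 hs11
    rw [e11a, e11b] at t11
    simp only [zero_add, add_zero] at t10 t01 t11
    have hsplit0 := cell_pair_split (d := d) γ₁ γ₂ 0
    have hsplit1 := cell_pair_split (d := d) γ₁ γ₂ 1
    have huniv := univ_split (d := d) γ₁
    rw [hsplit0, hsplit1] at huniv
    have hpow : (2:ℕ)^d = 2^(d-2) * 4 := by
      have h4 : (4:ℕ) = 2^2 := by norm_num
      rw [h4, ← pow_add]
      congr 1
      omega
    have : (cell d γ₁ γ₂ 0 0).card = 2^(d-2) := by omega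
    rcases zmod_cases ε with rfl | rfl
    · omega
    · omega

end Cells

section MChoice

open Finset

lemma zmod_add_self : ∀ x : ZMod 2, x + x = 0 := by decide
lemma zmod_decide_ne : ∀ x y : ZMod 2, x + y = 1 → decide (x = 1) ≠ decide (y = 1) := by decide

lemma exists_M {d k : ℕ} (hd : 2 ≤ d) (hk : 3 ≤ k) (hsize : k + 2 ≤ 2^(d-2))
    {γ₁ γ₂ : ℕ} (hγ₁ : γ₁ ≠ 0) (hγ₂ : γ₂ ≠ 0) (h1 : γ₁ < 2^d) (h2 : γ₂ < 2^d)
    (avoid : Finset (Fin (2^d))) (hav : avoid.card ≤ 4) (ρ : ZMod 2) :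
    ∃ M : Finset (Fin (2^d)), (∀ t ∈ M, t ∉ avoid) ∧ M.card = k - 2 ∧
      (∑ t ∈ M, bform d γ₁ t.val) = ρ ∧ (∑ t ∈ M, bform d γ₂ t.val) = ρ := by
  have hc0 : 2^(d-2) ≤ (cell d γ₁ γ₂ 0 0).card := diag_cell_card hd hγ₁ hγ₂ h1 h2 0
  have hcρ : 2^(d-2) ≤ (cell d γ₁ γ₂ ρ ρ).card := diag_cell_card hd hγ₁ hγ₂ h1 h2 ρ
  have hP : k - 3 ≤ ((cell d γ₁ γ₂ 0 0) \ avoid).card := by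
    have hle := Finset.card_le_card_sdiff_add_card (s := cell d γ₁ γ₂ 0 0) (t := avoid)
    omega
  obtain ⟨M₀, hM₀sub, hM₀card⟩ := Finset.exists_subset_card_eq hP
  have hQρ : 0 < ((cell d γ₁ γ₂ ρ ρ) \ (avoid ∪ M₀)).card := by
    have hle := Finset.card_le_card_sdiff_add_card (s := cell d γ₁ γ₂ ρ ρ)
      (t := avoid ∪ M₀)
    have hcub : (avoid ∪ M₀).card ≤ avoid.card + M₀.card := Finset.card_union_le _ _
    omega
  obtain ⟨m, hm⟩ := Finset.card_pos.mp hQρ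
  rw [Finset.mem_sdiff, Finset.mem_union] at hm
  push_neg at hm
  have hmM₀ : m ∉ M₀ := hm.2.2
  have hM₀cell : ∀ t ∈ M₀, t ∈ cell d γ₁ γ₂ 0 0 := by
    intro t ht
    exact (Finset.mem_sdiff.mp (hM₀sub ht)).1
  have hM₀av : ∀ t ∈ M₀, t ∉ avoid := by
    intro t ht
    exact (Finset.mem_sdiff.mp (hM₀sub ht)).2
  refine ⟨insert m M₀, ?_, ?_, ?_, ?_⟩
  · intro t ht
    rcases Finset.mem_insert.mp ht with rfl | ht'
    · exact hm.2.1
    · exact hM₀av t ht'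
  · rw [Finset.card_insert_of_notMem hmM₀, hM₀card]
    omega
  · rw [Finset.sum_insert hmM₀]
    have hz : ∑ t ∈ M₀, bform d γ₁ t.val = 0 := by
      apply Finset.sum_eq_zero
      intro t ht
      have := hM₀cell t ht
      simp only [cell, Finset.mem_filter] at this
      exact this.2.1
    have hmval : bform d γ₁ m.val = ρ := by
      have := hm.1
      simp only [cell, Finset.mem_filter] at this
      exact this.2.1
    rw [hz, hmval, add_zero]
  · rw [Finset.sum_insert hmM₀]
    have hz : ∑ t ∈ M₀, bform d γ₂ t.val = 0 := by
      apply Finset.sum_eq_zero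
      intro t ht
      have := hM₀cell t ht
      simp only [cell, Finset.mem_filter] at this
      exact this.2.2
    have hmval : bform d γ₂ m.val = ρ := by
      have := hm.1
      simp only [cell, Finset.mem_filter] at this
      exact this.2.2
    rw [hz, hmval, add_zero]

/-- the pair-parity colouring. -/
def Qsum (d : ℕ) {h : ℕ} (S : Finset (Fin h)) : ZMod 2 :=
  ∑ u ∈ S, ∑ v ∈ S, if v < u then bform d u.val v.val else 0

lemma Qsum_insert (d : ℕ) {h : ℕ} (a : Fin h) (S : Finset (Fin h)) (ha : a ∉ S) :
    Qsum d (insert a S) = Qsum d S + ∑ t ∈ S, bform d a.val t.val := by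
  unfold Qsum
  rw [Finset.sum_insert ha]
  have hinner : ∀ u : Fin h, (∑ v ∈ insert a S, if v < u then bform d u.val v.val else 0)
      = (if a < u then bform d u.val a.val else 0)
        + ∑ v ∈ S, if v < u then bform d u.val v.val else 0 :=
    fun u => Finset.sum_insert ha
  rw [hinner a]
  have e0 : (if a < a then bform d a.val a.val else 0) = 0 := by simp
  rw [e0, zero_add]
  have hsplit : (∑ u ∈ S, ∑ v ∈ insert a S, if v < u then bform d u.val v.val else 0)
      = ∑ u ∈ S, ((if a < u then bform d u.val a.val else 0)
          + ∑ v ∈ S, if v < u then bform d u.val v.val else 0) :=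
    Finset.sum_congr rfl (fun u _ => hinner u)
  rw [hsplit, Finset.sum_add_distrib]
  have key : (∑ v ∈ S, if v < a then bform d a.val v.val else 0)
      + (∑ u ∈ S, if a < u then bform d u.val a.val else 0)
      = ∑ t ∈ S, bform d a.val t.val := by
    rw [← Finset.sum_add_distrib]
    apply Finset.sum_congr rfl
    intro t htS
    have hta : t ≠ a := fun hc => ha (hc ▸ htS)
    rcases lt_or_gt_of_ne hta with hlt | hgt
    · rw [if_pos hlt, if_neg (asymm hlt), add_zero]
    · rw [if_neg (asymm hgt), if_pos hgt, zero_add, bform_comm]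
  rw [← key]
  ring

lemma Qsum_pair_diff (d : ℕ) {h : ℕ} (U : Finset (Fin h)) (a b : Fin h)
    (ha : a ∉ U) (hb : b ∉ U) :
    Qsum d (insert a U) + Qsum d (insert b U)
      = ∑ t ∈ U, bform d (a.val ^^^ b.val) t.val := by
  rw [Qsum_insert _ _ _ ha, Qsum_insert _ _ _ hb]
  have hcongr : ∑ t ∈ U, bform d (a.val ^^^ b.val) t.val
      = ∑ t ∈ U, (bform d a.val t.val + bform d b.val t.val) :=
    Finset.sum_congr rfl (fun t _ => bform_xor_left _ _ _ _)
  rw [hcongr, Finset.sum_add_distrib]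
  have : (Qsum d U + ∑ t ∈ U, bform d a.val t.val)
      + (Qsum d U + ∑ t ∈ U, bform d b.val t.val)
      = (Qsum d U + Qsum d U)
        + ((∑ t ∈ U, bform d a.val t.val) + ∑ t ∈ U, bform d b.val t.val) := by ring
  rw [this, zmod_add_self, zero_add]

end MChoice

section Assembly

open Finset

lemma zmod_final : ∀ x : ZMod 2, x + (1 + x) = 1 := by decide

lemma sort_eq_of_sorted {l : List ℕ} (hs : l.Pairwise (· < ·)) {S : Finset ℕ}
    (hS : l.toFinset = S) : S.sort (· ≤ ·) = l := by
  have hperm : (S.sort (· ≤ ·)).Perm l := by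
    apply List.perm_of_nodup_nodup_toFinset_eq (Finset.sort_nodup _ _) hs.nodup
    rw [Finset.sort_toFinset, hS]
  exact hperm.eq_of_pairwise (fun _ _ _ _ h1 h2 => le_antisymm h1 h2) (Finset.pairwise_sort _ _)
    (hs.imp le_of_lt)

lemma stepUpColour_eq_core (c : Finset ℕ → Bool) (S : Finset ℕ) :
    stepUpColour c S = core c (deltaList (S.sort (· ≤ ·))) := rfl

theorem stmt_11' (k : ℕ) (hk : 3 ≤ k) :
    ∃ (h : ℕ) (χ : Finset (Fin h) → Bool), k + 5 ≤ h ∧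
      ∀ n : ℕ, 0 < n → ∀ c : Finset ℕ → Bool,
        ¬ ∃ f : Fin h ↪ ℕ, (∀ x : Fin h, (f x) < 2 ^ n) ∧
          ∀ S : Finset (Fin h), S.card = k + 1 →
            stepUpColour c (S.map f) = χ S := by
  set d := Nat.clog 2 (k+5) + 2 with hdd
  have hclog : k + 5 ≤ 2 ^ Nat.clog 2 (k+5) := Nat.le_pow_clog (by norm_num) _
  have hpowle : (2:ℕ) ^ Nat.clog 2 (k+5) ≤ 2 ^ d := Nat.pow_le_pow_right (by norm_num) (by omega)
  have hk5 : k + 5 ≤ 2 ^ d := le_trans hclog hpowle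
  have hd2 : 2 ≤ d := by omega
  have hsize : k + 2 ≤ 2 ^ (d - 2) := by
    have hdc : d - 2 = Nat.clog 2 (k+5) := by omega
    rw [hdc]
    omega
  refine ⟨2^d, fun S => decide (Qsum d S = 1), hk5, ?_⟩
  rintro n hn c ⟨f, hbound, hmatch⟩
  have hbig : 8 ≤ 2 ^ d := by omega
  have hfinj : Function.Injective f := f.injective
  -- extremes
  have hne_univ : (Finset.univ : Finset (Fin (2^d))).Nonempty :=
    ⟨⟨0, by positivity⟩, mem_univ _⟩
  obtain ⟨v₁, _, hv₁⟩ := Finset.exists_min_image univ f hne_univ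
  have hU₁ne : (univ.erase v₁).Nonempty := by
    apply Finset.card_pos.mp
    rw [Finset.card_erase_of_mem (mem_univ _), Finset.card_univ, Fintype.card_fin]
    omega
  obtain ⟨v₂, hv₂mem, hv₂⟩ := Finset.exists_min_image (univ.erase v₁) f hU₁ne
  obtain ⟨v₄, _, hv₄⟩ := Finset.exists_max_image univ f hne_univ
  have hU₄ne : (univ.erase v₄).Nonempty := by
    apply Finset.card_pos.mp
    rw [Finset.card_erase_of_mem (mem_univ _), Finset.card_univ, Fintype.card_fin]
    omega
  obtain ⟨v₃, hv₃mem, hv₃⟩ := Finset.exists_max_image (univ.erase v₄) f hU₄ne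
  have h21 : v₂ ≠ v₁ := (Finset.mem_erase.mp hv₂mem).1
  have h34 : v₃ ≠ v₄ := (Finset.mem_erase.mp hv₃mem).1
  have hlow1 : ∀ t, t ≠ v₁ → f v₁ < f t := by
    intro t ht
    exact lt_of_le_of_ne (hv₁ t (mem_univ _)) (fun hc => ht (hfinj hc).symm)
  have hlow2 : ∀ t, t ≠ v₁ → t ≠ v₂ → f v₂ < f t := by
    intro t ht1 ht2
    have : t ∈ univ.erase v₁ := Finset.mem_erase.mpr ⟨ht1, mem_univ _⟩
    exact lt_of_le_of_ne (hv₂ t this) (fun hc => ht2 (hfinj hc).symm)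
  have hhigh4 : ∀ t, t ≠ v₄ → f t < f v₄ := by
    intro t ht
    exact lt_of_le_of_ne (hv₄ t (mem_univ _)) (fun hc => ht (hfinj hc))
  have hhigh3 : ∀ t, t ≠ v₄ → t ≠ v₃ → f t < f v₃ := by
    intro t ht4 ht3
    have : t ∈ univ.erase v₄ := Finset.mem_erase.mpr ⟨ht4, mem_univ _⟩
    exact lt_of_le_of_ne (hv₃ t this) (fun hc => ht3 (hfinj hc))
  have hf12 : f v₁ < f v₂ := hlow1 v₂ h21
  -- a point outside {v₁, v₂, v₄}
  have hsp : ∃ t : Fin (2^d), t ≠ v₁ ∧ t ≠ v₂ ∧ t ≠ v₄ := by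
    have hss : ({v₁, v₂, v₄} : Finset (Fin (2^d))).card ≤ 3 := by
      apply le_trans (Finset.card_insert_le _ _)
      apply Nat.succ_le_succ
      apply le_trans (Finset.card_insert_le _ _)
      simp
    have : 0 < (univ \ ({v₁, v₂, v₄} : Finset (Fin (2^d)))).card := by
      have hle := Finset.card_le_card_sdiff_add_card
        (s := (univ : Finset (Fin (2^d)))) (t := ({v₁, v₂, v₄} : Finset (Fin (2^d))))
      rw [Finset.card_univ, Fintype.card_fin] at hle
      omega
    obtain ⟨t, ht⟩ := Finset.card_pos.mp this
    rw [Finset.mem_sdiff] at ht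
    simp only [Finset.mem_insert, Finset.mem_singleton] at ht
    push_neg at ht
    exact ⟨t, ht.2.1, ht.2.2.1, ht.2.2.2⟩
  obtain ⟨t₁, ht₁1, ht₁2, ht₁4⟩ := hsp
  -- f v₃ > f v₂
  have hf23 : f v₂ < f v₃ := by
    rcases eq_or_ne t₁ v₃ with rfl | ht₁3
    · exact hlow2 _ ht₁1 ht₁2
    · have h1 : f t₁ < f v₃ := hhigh3 t₁ ht₁4 ht₁3
      have h2 : f v₂ < f t₁ := hlow2 t₁ ht₁1 ht₁2
      omega
  have hf34 : f v₃ < f v₄ := hhigh4 v₃ h34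
  -- distinctness of the four
  have h31 : v₃ ≠ v₁ := by
    intro hc; rw [hc] at hf23; have := hf12; omega
  have h32 : v₃ ≠ v₂ := by
    intro hc; rw [hc] at hf23; omega
  have h41 : v₄ ≠ v₁ := by
    intro hc; rw [hc] at hf34; have h2 := hlow1 v₃ h31; omega
  have h42 : v₄ ≠ v₂ := by
    intro hc; rw [hc] at hf34; have h2 := hlow2 v₃ h31 h32; omega
  -- the linear forms
  have hvne12 : (v₁ : Fin (2^d)).val ≠ v₂.val := fun hc => h21.symm (Fin.ext hc)
  have hvne34 : (v₃ : Fin (2^d)).val ≠ v₄.val := fun hc => h34 (Fin.ext hc)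
  set γ₁ := v₁.val ^^^ v₂.val with hγ₁def
  set γ₂ := v₃.val ^^^ v₄.val with hγ₂def
  have hγ₁ : γ₁ ≠ 0 := xor_ne_zero hvne12
  have hγ₂ : γ₂ ≠ 0 := xor_ne_zero hvne34
  have hγ₁lt : γ₁ < 2^d := Nat.xor_lt_two_pow v₁.isLt v₂.isLt
  have hγ₂lt : γ₂ < 2^d := Nat.xor_lt_two_pow v₃.isLt v₄.isLt
  set avoid : Finset (Fin (2^d)) := {v₁, v₂, v₃, v₄} with havoid
  have havcard : avoid.card ≤ 4 := by
    apply le_trans (Finset.card_insert_le _ _)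
    apply Nat.succ_le_succ
    apply le_trans (Finset.card_insert_le _ _)
    apply Nat.succ_le_succ
    apply le_trans (Finset.card_insert_le _ _)
    simp
  set ρ : ZMod 2 := 1 + bform d γ₁ γ₂ with hρdef
  obtain ⟨M, hMav, hMcard, hMsum1, hMsum2⟩ :=
    exists_M hd2 hk hsize hγ₁ hγ₂ hγ₁lt hγ₂lt avoid havcard ρ
  have hMne : ∀ t ∈ M, t ≠ v₁ ∧ t ≠ v₂ ∧ t ≠ v₃ ∧ t ≠ v₄ := by
    intro t ht
    have := hMav t ht
    rw [havoid] at this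
    simp only [Finset.mem_insert, Finset.mem_singleton] at this
    push_neg at this
    exact this
  -- the witness configuration
  have hv₄M : v₄ ∉ M := fun hc => (hMne v₄ hc).2.2.2 rfl
  have hv₃M : v₃ ∉ M := fun hc => (hMne v₃ hc).2.2.1 rfl
  have hv₂M : v₂ ∉ M := fun hc => (hMne v₂ hc).2.1 rfl
  have hv₁M : v₁ ∉ M := fun hc => (hMne v₁ hc).1 rfl
  have hv₃in : v₃ ∉ insert v₄ M := by
    simp only [Finset.mem_insert]
    push_neg
    exact ⟨h34, hv₃M⟩
  have hv₂in : v₂ ∉ insert v₃ (insert v₄ M) := by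
    simp only [Finset.mem_insert]
    push_neg
    exact ⟨h32.symm, h42.symm, hv₂M⟩
  have hv₁in : v₁ ∉ insert v₂ (insert v₃ (insert v₄ M)) := by
    simp only [Finset.mem_insert]
    push_neg
    exact ⟨h21.symm, h31.symm, h41.symm, hv₁M⟩
  set W : Finset (Fin (2^d)) := insert v₁ (insert v₂ (insert v₃ (insert v₄ M))) with hWdef
  have hWcard : W.card = k + 2 := by
    rw [hWdef, Finset.card_insert_of_notMem hv₁in, Finset.card_insert_of_notMem hv₂in,
      Finset.card_insert_of_notMem hv₃in, Finset.card_insert_of_notMem hv₄M, hMcard]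
    omega
  -- the four erased sets
  have hE₁ : W.erase v₁ = insert v₂ (insert v₃ (insert v₄ M)) :=
    Finset.erase_insert hv₁in
  have hE₂ : W.erase v₂ = insert v₁ (insert v₃ (insert v₄ M)) := by
    rw [hWdef, Finset.erase_insert_of_ne h21.symm]
    congr 1
    exact Finset.erase_insert hv₂in
  have hE₃ : W.erase v₃ = insert v₁ (insert v₂ (insert v₄ M)) := by
    rw [hWdef, Finset.erase_insert_of_ne h31.symm, Finset.erase_insert_of_ne h32.symm]
    congr 2
    exact Finset.erase_insert hv₃in
  have hE₄ : W.erase v₄ = insert v₁ (insert v₂ (insert v₃ M)) := by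
    rw [hWdef, Finset.erase_insert_of_ne h41.symm, Finset.erase_insert_of_ne h42.symm,
      Finset.erase_insert_of_ne h34]
    congr 3
    exact Finset.erase_insert hv₄M
  -- parity computations
  have hv₁U : v₁ ∉ insert v₃ (insert v₄ M) := by
    simp only [Finset.mem_insert]
    push_neg
    exact ⟨h31.symm, h41.symm, hv₁M⟩
  have hQ12 : Qsum d (W.erase v₁) + Qsum d (W.erase v₂) = 1 := by
    rw [hE₁, hE₂, Qsum_pair_diff d (insert v₃ (insert v₄ M)) v₂ v₁ hv₂in hv₁U]
    have hxorc : v₂.val ^^^ v₁.val = γ₁ := by rw [hγ₁def, Nat.xor_comm]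
    rw [hxorc, Finset.sum_insert hv₃in, Finset.sum_insert hv₄M, hMsum1]
    have : bform d γ₁ v₃.val + (bform d γ₁ v₄.val + ρ) = bform d γ₁ γ₂ + ρ := by
      rw [hγ₂def, bform_xor_right]
      ring
    rw [this, hρdef]
    exact zmod_final _
  have hv₁V : v₁ ∉ insert v₂ M := by
    simp only [Finset.mem_insert]
    push_neg
    exact ⟨h21.symm, hv₁M⟩
  have hv₃V : v₃ ∉ insert v₁ (insert v₂ M) := by
    simp only [Finset.mem_insert]
    push_neg
    exact ⟨h31, h32, hv₃M⟩
  have hv₄V : v₄ ∉ insert v₁ (insert v₂ M) := by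
    simp only [Finset.mem_insert]
    push_neg
    exact ⟨h41, h42, hv₄M⟩
  have hE₃' : W.erase v₃ = insert v₄ (insert v₁ (insert v₂ M)) := by
    rw [hE₃, Finset.insert_comm v₂ v₄, Finset.insert_comm v₁ v₄]
  have hE₄' : W.erase v₄ = insert v₃ (insert v₁ (insert v₂ M)) := by
    rw [hE₄, Finset.insert_comm v₂ v₃, Finset.insert_comm v₁ v₃]
  have hQ34 : Qsum d (W.erase v₃) + Qsum d (W.erase v₄) = 1 := by
    rw [hE₃', hE₄', Qsum_pair_diff d (insert v₁ (insert v₂ M)) v₄ v₃ hv₄V hv₃V]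
    have hxorc : v₄.val ^^^ v₃.val = γ₂ := by rw [hγ₂def, Nat.xor_comm]
    rw [hxorc, Finset.sum_insert hv₁V, Finset.sum_insert hv₂M, hMsum2]
    have h1 : bform d γ₂ (v₁.val ^^^ v₂.val) = bform d γ₂ v₁.val + bform d γ₂ v₂.val :=
      bform_xor_right d _ _ _
    have : bform d γ₂ v₁.val + (bform d γ₂ v₂.val + ρ) = bform d γ₁ γ₂ + ρ := by
      rw [hγ₁def, bform_comm d _ γ₂, h1]
      ring
    rw [this, hρdef]
    exact zmod_final _
  have hχ12 : decide (Qsum d (W.erase v₁) = 1) ≠ decide (Qsum d (W.erase v₂) = 1) :=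
    zmod_decide_ne _ _ hQ12
  have hχ34 : decide (Qsum d (W.erase v₃) = 1) ≠ decide (Qsum d (W.erase v₄) = 1) :=
    zmod_decide_ne _ _ hQ34
  -- erase cards and colour matches
  have hv₁W : v₁ ∈ W := by rw [hWdef]; simp
  have hv₂W : v₂ ∈ W := by rw [hWdef]; simp
  have hv₃W : v₃ ∈ W := by rw [hWdef]; simp
  have hv₄W : v₄ ∈ W := by rw [hWdef]; simp
  have hWc₁ : (W.erase v₁).card = k + 1 := by
    rw [Finset.card_erase_of_mem hv₁W, hWcard]
    omega
  have hWc₂ : (W.erase v₂).card = k + 1 := by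
    rw [Finset.card_erase_of_mem hv₂W, hWcard]
    omega
  have hWc₃ : (W.erase v₃).card = k + 1 := by
    rw [Finset.card_erase_of_mem hv₃W, hWcard]
    omega
  have hWc₄ : (W.erase v₄).card = k + 1 := by
    rw [Finset.card_erase_of_mem hv₄W, hWcard]
    omega
  have hm₁ := hmatch (W.erase v₁) hWc₁
  have hm₂ := hmatch (W.erase v₂) hWc₂
  have hm₃ := hmatch (W.erase v₃) hWc₃
  have hm₄ := hmatch (W.erase v₄) hWc₄
  -- sorted image lists
  set msort := (M.map f).sort (· ≤ ·) with hms
  have hmslen : msort.length = k - 2 := by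
    rw [hms, Finset.length_sort, Finset.card_map, hMcard]
  have hmsnil : msort ≠ [] := by
    apply List.ne_nil_of_length_pos
    omega
  have hmsmem : ∀ x ∈ msort, ∃ t ∈ M, f t = x := by
    intro x hx
    rw [hms, Finset.mem_sort] at hx
    exact Finset.mem_map.mp hx
  have hms_lb2 : ∀ x ∈ msort, f v₂ < x := by
    intro x hx
    obtain ⟨t, htM, rfl⟩ := hmsmem x hx
    exact hlow2 t (hMne t htM).1 (hMne t htM).2.1
  have hms_lb1 : ∀ x ∈ msort, f v₁ < x := by
    intro x hx
    obtain ⟨t, htM, rfl⟩ := hmsmem x hx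
    exact hlow1 t (hMne t htM).1
  have hms_ub3 : ∀ x ∈ msort, x < f v₃ := by
    intro x hx
    obtain ⟨t, htM, rfl⟩ := hmsmem x hx
    exact hhigh3 t (hMne t htM).2.2.2 (hMne t htM).2.2.1
  have hms_ub4 : ∀ x ∈ msort, x < f v₄ := by
    intro x hx
    obtain ⟨t, htM, rfl⟩ := hmsmem x hx
    exact hhigh4 t (hMne t htM).2.2.2
  have hms_sorted : msort.Pairwise (· < ·) := by
    rw [hms]
    exact (Finset.sortedLT_sort _).pairwise
  have hf13 : f v₁ < f v₃ := lt_trans hf12 hf23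
  have hf14 : f v₁ < f v₄ := lt_trans hf13 hf34
  have hf24 : f v₂ < f v₄ := lt_trans hf23 hf34
  -- sortedness of the four lists
  have htail34 : (msort ++ [f v₃, f v₄]).Pairwise (· < ·) := by
    refine List.pairwise_append.mpr ⟨hms_sorted, ?_, ?_⟩
    · simp [List.pairwise_cons, hf34]
    · intro x hx y hy
      simp only [List.mem_cons, List.not_mem_nil, or_false] at hy
      rcases hy with rfl | rfl
      · exact hms_ub3 x hx
      · exact hms_ub4 x hx
  have htail3 : (msort ++ [f v₃]).Pairwise (· < ·) := by
    refine List.pairwise_append.mpr ⟨hms_sorted, by simp, ?_⟩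
    intro x hx y hy
    simp only [List.mem_singleton] at hy
    subst hy
    exact hms_ub3 x hx
  have htail4 : (msort ++ [f v₄]).Pairwise (· < ·) := by
    refine List.pairwise_append.mpr ⟨hms_sorted, by simp, ?_⟩
    intro x hx y hy
    simp only [List.mem_singleton] at hy
    subst hy
    exact hms_ub4 x hx
  have hsortL₁ : (f v₂ :: (msort ++ [f v₃, f v₄])).Pairwise (· < ·) := by
    rw [List.pairwise_cons]
    refine ⟨?_, htail34⟩
    intro b hb
    rcases List.mem_append.mp hb with hb' | hb'
    · exact hms_lb2 b hb'
    · simp only [List.mem_cons, List.not_mem_nil, or_false] at hb'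
      rcases hb' with rfl | rfl
      · exact hf23
      · exact hf24
  have hsortL₂ : (f v₁ :: (msort ++ [f v₃, f v₄])).Pairwise (· < ·) := by
    rw [List.pairwise_cons]
    refine ⟨?_, htail34⟩
    intro b hb
    rcases List.mem_append.mp hb with hb' | hb'
    · exact hms_lb1 b hb'
    · simp only [List.mem_cons, List.not_mem_nil, or_false] at hb'
      rcases hb' with rfl | rfl
      · exact hf13
      · exact hf14
  have hsortL₃ : (f v₁ :: f v₂ :: (msort ++ [f v₄])).Pairwise (· < ·) := by
    rw [List.pairwise_cons, List.pairwise_cons]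
    refine ⟨?_, ?_, htail4⟩
    · intro b hb
      simp only [List.mem_cons] at hb
      rcases hb with rfl | hb'
      · exact hf12
      · rcases List.mem_append.mp hb' with hb'' | hb''
        · exact hms_lb1 b hb''
        · simp only [List.mem_singleton] at hb''
          subst hb''
          exact hf14
    · intro b hb
      rcases List.mem_append.mp hb with hb' | hb'
      · exact hms_lb2 b hb'
      · simp only [List.mem_singleton] at hb'
        subst hb'
        exact hf24
  have hsortL₄ : (f v₁ :: f v₂ :: (msort ++ [f v₃])).Pairwise (· < ·) := by
    rw [List.pairwise_cons, List.pairwise_cons]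
    refine ⟨?_, ?_, htail3⟩
    · intro b hb
      simp only [List.mem_cons] at hb
      rcases hb with rfl | hb'
      · exact hf12
      · rcases List.mem_append.mp hb' with hb'' | hb''
        · exact hms_lb1 b hb''
        · simp only [List.mem_singleton] at hb''
          subst hb''
          exact hf13
    · intro b hb
      rcases List.mem_append.mp hb with hb' | hb'
      · exact hms_lb2 b hb'
      · simp only [List.mem_singleton] at hb'
        subst hb'
        exact hf23
  have hsortFull : (f v₁ :: f v₂ :: (msort ++ [f v₃, f v₄])).Pairwise (· < ·) := by
    rw [List.pairwise_cons]
    refine ⟨?_, hsortL₁⟩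
    intro b hb
    simp only [List.mem_cons] at hb
    rcases hb with rfl | hb'
    · exact hf12
    · rcases List.mem_append.mp hb' with hb'' | hb''
      · exact hms_lb1 b hb''
      · simp only [List.mem_cons, List.not_mem_nil, or_false] at hb''
        rcases hb'' with rfl | rfl
        · exact hf13
        · exact hf14
  -- toFinset identities
  have hmstf : msort.toFinset = M.map f := by
    rw [hms]
    exact Finset.sort_toFinset _ _
  have htoF₁ : (f v₂ :: (msort ++ [f v₃, f v₄])).toFinset = (W.erase v₁).map f := by
    rw [hE₁, Finset.map_insert, Finset.map_insert, Finset.map_insert]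
    simp only [List.toFinset_cons, List.toFinset_append, List.toFinset_nil, hmstf]
    rw [Finset.union_insert, Finset.union_insert, Finset.union_empty]
  have htoF₂ : (f v₁ :: (msort ++ [f v₃, f v₄])).toFinset = (W.erase v₂).map f := by
    rw [hE₂, Finset.map_insert, Finset.map_insert, Finset.map_insert]
    simp only [List.toFinset_cons, List.toFinset_append, List.toFinset_nil, hmstf]
    rw [Finset.union_insert, Finset.union_insert, Finset.union_empty]
  have htoF₃ : (f v₁ :: f v₂ :: (msort ++ [f v₄])).toFinset = (W.erase v₃).map f := by
    rw [hE₃, Finset.map_insert, Finset.map_insert, Finset.map_insert]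
    simp only [List.toFinset_cons, List.toFinset_append, List.toFinset_nil, hmstf]
    rw [Finset.union_insert, Finset.union_empty]
  have htoF₄ : (f v₁ :: f v₂ :: (msort ++ [f v₃])).toFinset = (W.erase v₄).map f := by
    rw [hE₄, Finset.map_insert, Finset.map_insert, Finset.map_insert]
    simp only [List.toFinset_cons, List.toFinset_append, List.toFinset_nil, hmstf]
    rw [Finset.union_insert, Finset.union_empty]
  have hsort₁ := sort_eq_of_sorted hsortL₁ htoF₁
  have hsort₂ := sort_eq_of_sorted hsortL₂ htoF₂
  have hsort₃ := sort_eq_of_sorted hsortL₃ htoF₃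
  have hsort₄ := sort_eq_of_sorted hsortL₄ htoF₄
  -- apply the universal lemma
  have hchain : (f v₁ :: f v₂ :: (msort ++ [f v₃, f v₄])).IsChain (· < ·) :=
    List.isChain_iff_pairwise.mpr hsortFull
  have hul := UL c (f v₁) (f v₂) (f v₃) (f v₄) msort hmsnil hchain
  have e₁ : stepUpColour c ((W.erase v₁).map f)
      = core c (deltaList (f v₂ :: (msort ++ [f v₃, f v₄]))) := by
    rw [stepUpColour_eq_core, hsort₁]
  have e₂ : stepUpColour c ((W.erase v₂).map f)
      = core c (deltaList (f v₁ :: (msort ++ [f v₃, f v₄]))) := by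
    rw [stepUpColour_eq_core, hsort₂]
  have e₃ : stepUpColour c ((W.erase v₃).map f)
      = core c (deltaList (f v₁ :: f v₂ :: (msort ++ [f v₄]))) := by
    rw [stepUpColour_eq_core, hsort₃]
  have e₄ : stepUpColour c ((W.erase v₄).map f)
      = core c (deltaList (f v₁ :: f v₂ :: (msort ++ [f v₃]))) := by
    rw [stepUpColour_eq_core, hsort₄]
  have hhyp : core c (deltaList (f v₂ :: (msort ++ [f v₃, f v₄])))
      ≠ core c (deltaList (f v₁ :: (msort ++ [f v₃, f v₄]))) := by
    rw [← e₁, ← e₂, hm₁, hm₂]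
    exact hχ12
  have hconc := hul hhyp
  rw [← e₃, ← e₄, hm₃, hm₄] at hconc
  exact hχ34 hconc

end Assembly

/-- for every `k ≥ 3` there are a finite set `H` with `|H| ≥ k + 5` and a
2-colouring `χ` of the `(k+1)`-element subsets of `H` such that for every positive integer `n`
and every 2-colouring `c` of the `k`-element subsets of `{0, …, n-1}`, the step-up colouring
associated with `c` contains no copy of `(H, χ)`. -/
theorem stmt_11 (k : ℕ) (hk : 3 ≤ k) :
    ∃ (h : ℕ) (χ : Finset (Fin h) → Bool), k + 5 ≤ h ∧
      ∀ n : ℕ, 0 < n → ∀ c : Finset ℕ → Bool,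
        ¬ ∃ f : Fin h ↪ ℕ, (∀ x : Fin h, (f x) < 2 ^ n) ∧
          ∀ S : Finset (Fin h), S.card = k + 1 →
            stepUpColour c (S.map f) = χ S := by
  exact stmt_11' k hk
end

section
/- For all integers k ≥ 3 and h ≥ k + 5, the inequality h! · (h−1)^{h−1} · 2^{C(h−1, k)} < 2^{C(h, k+1)} holds, where C(m, r) denotes the binomial coefficient m choose r. Equivalently, (h−1)^{h−1} · 2^{C(h−1,k)} < (1/h!) · 2^{C(h,k+1)}. -/
lemma choose_mono_right_aux (m a b : ℕ) (hab : a ≤ b) (hb : b ≤ m / 2) :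
    Nat.choose m a ≤ Nat.choose m b := by
  induction b, hab using Nat.le_induction with
  | base => exact le_refl _
  | succ b hab ih =>
    exact le_trans (ih (by omega)) (Nat.choose_le_succ_of_lt_half_left (by omega))

lemma choose_three_le (m r : ℕ) (h3 : 3 ≤ r) (hm : r + 3 ≤ m) :
    Nat.choose m 3 ≤ Nat.choose m r := by
  rcases le_or_gt r (m / 2) with h | h
  · exact choose_mono_right_aux m 3 r h3 h
  · rw [← Nat.choose_symm (show r ≤ m by omega)]
    exact choose_mono_right_aux m 3 (m - r) (by omega) (by omega)

lemma quad_le_pow (n : ℕ) : (n + 9) * (n + 8) ≤ 2 ^ (n + 8) := by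
  induction n with
  | zero => norm_num
  | succ n ih =>
    calc (n + 1 + 9) * (n + 1 + 8) ≤ 2 * ((n + 9) * (n + 8)) := by nlinarith
    _ ≤ 2 * 2 ^ (n + 8) := Nat.mul_le_mul_left 2 ih
    _ = 2 ^ (n + 1 + 8) := by ring

lemma lin_le_choose (n : ℕ) : 2 * n + 15 ≤ Nat.choose (n + 7) 2 := by
  rw [Nat.choose_two_right, Nat.le_div_iff_mul_le (by norm_num),
    show n + 7 - 1 = n + 6 by omega]
  nlinarith

lemma key_base : Nat.factorial 8 * 7 ^ 7 < 2 ^ Nat.choose 7 3 := by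
  have h1 : Nat.factorial 8 = 40320 := by decide
  have h2 : Nat.choose 7 3 = 35 := by decide
  rw [h1, h2]
  norm_num

lemma key (n : ℕ) :
    Nat.factorial (n + 8) * (n + 7) ^ (n + 7) < 2 ^ Nat.choose (n + 7) 3 := by
  induction n with
  | zero => exact key_base
  | succ n ih =>
    have e1 : n + 1 + 8 = (n + 8) + 1 := by ring
    have e2 : n + 1 + 7 = (n + 7) + 1 := by ring
    rw [e1, e2, Nat.factorial_succ, Nat.choose_succ_succ (n + 7) 2]
    have hb : (n + 8) ^ (n + 7) ≤ 2 ^ (n + 7) * (n + 7) ^ (n + 7) := by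
      calc (n + 8) ^ (n + 7) ≤ (2 * (n + 7)) ^ (n + 7) :=
            Nat.pow_le_pow_left (by omega) _
        _ = 2 ^ (n + 7) * (n + 7) ^ (n + 7) := by rw [mul_pow]
    calc ((n + 8) + 1) * Nat.factorial (n + 8) * (n + 8) ^ ((n + 7) + 1)
        = ((n + 9) * (n + 8)) * ((n + 8) ^ (n + 7)) * Nat.factorial (n + 8) := by
          rw [pow_succ]; ring
      _ ≤ ((n + 9) * (n + 8)) * (2 ^ (n + 7) * (n + 7) ^ (n + 7)) * Nat.factorial (n + 8) :=
          Nat.mul_le_mul (Nat.mul_le_mul le_rfl hb) le_rfl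
      _ = ((n + 9) * (n + 8)) * 2 ^ (n + 7) * (Nat.factorial (n + 8) * (n + 7) ^ (n + 7)) := by
          ring
      _ < ((n + 9) * (n + 8)) * 2 ^ (n + 7) * 2 ^ Nat.choose (n + 7) 3 :=
          Nat.mul_lt_mul_of_le_of_lt (le_refl _) ih (by positivity)
      _ ≤ 2 ^ (n + 8) * 2 ^ (n + 7) * 2 ^ Nat.choose (n + 7) 3 :=
          Nat.mul_le_mul (Nat.mul_le_mul (quad_le_pow n) le_rfl) le_rfl
      _ = 2 ^ (2 * n + 15) * 2 ^ Nat.choose (n + 7) 3 := by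
          rw [← pow_add]; ring_nf
      _ ≤ 2 ^ Nat.choose (n + 7) 2 * 2 ^ Nat.choose (n + 7) 3 :=
          Nat.mul_le_mul (Nat.pow_le_pow_right (by norm_num) (lin_le_choose n)) le_rfl
      _ = 2 ^ (Nat.choose (n + 7) 2 + Nat.choose (n + 7) 3) := (pow_add 2 _ _).symm

/-- for all integers `k ≥ 3` and `h ≥ k + 5`,
`h! · (h-1)^(h-1) · 2^C(h-1, k) < 2^C(h, k+1)`. -/
theorem stmt_15 (k h : ℕ) (hk : 3 ≤ k) (hh : k + 5 ≤ h) :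
    Nat.factorial h * (h - 1) ^ (h - 1) * 2 ^ Nat.choose (h - 1) k <
      2 ^ Nat.choose h (k + 1) := by
  obtain ⟨n, rfl⟩ := Nat.exists_eq_add_of_le (show 8 ≤ h by omega)
  have e1 : 8 + n - 1 = n + 7 := by omega
  have e2 : 8 + n = (n + 7) + 1 := by omega
  rw [e1, e2, Nat.choose_succ_succ (n + 7) k]
  have hmain : Nat.factorial (n + 8) * (n + 7) ^ (n + 7) < 2 ^ Nat.choose (n + 7) (k + 1) :=
    calc Nat.factorial (n + 8) * (n + 7) ^ (n + 7) < 2 ^ Nat.choose (n + 7) 3 := key n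
      _ ≤ 2 ^ Nat.choose (n + 7) (k + 1) :=
        Nat.pow_le_pow_right (by norm_num) (choose_three_le (n + 7) (k + 1) (by omega) (by omega))
  calc Nat.factorial ((n + 7) + 1) * (n + 7) ^ (n + 7) * 2 ^ Nat.choose (n + 7) k
      = (Nat.factorial (n + 8) * (n + 7) ^ (n + 7)) * 2 ^ Nat.choose (n + 7) k := by
        rw [show (n + 7) + 1 = n + 8 by ring]
    _ < 2 ^ Nat.choose (n + 7) (k + 1) * 2 ^ Nat.choose (n + 7) k :=
        Nat.mul_lt_mul_of_lt_of_le hmain (le_refl _) (by positivity)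
    _ = 2 ^ (Nat.choose (n + 7) k + Nat.choose (n + 7) (k + 1)) := by
        rw [← pow_add, Nat.add_comm]
end

section
/- Let k ≥ 3, let 𝒢₀ be a (k−1)-uniform hypergraph on the vertex set {1, 2, …, n}, and let m be a positive integer such that 𝒢₀ contains no complete and no empty (k−1)-partite subgraph with k−1 disjoint parts each of size m (i.e., there are no pairwise disjoint sets S₁, …, S_{k−1} ⊆ {1,…,n} each of size m such that every (k−1)-tuple with exactly one vertex in each part is an edge of 𝒢₀, or none is). Let 𝒢 be the k-uniform hypergraph on {1, 2, …, n} whose edges are exactly the k-tuples (i₁, …, i_k) with i₁ < ⋯ < i_k such that {i₁, …, i_{k−1}} is an edge of 𝒢₀. Then 𝒢 contains no complete and no empty k-partite subgraph with k disjoint parts each of size m. -/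
/-- `e` is an edge of the `k`-uniform hypergraph associated to a `(k-1)`-uniform hypergraph
`G₀` on `{1, …, n}`: the `k`-sets `{i₁ < ⋯ < i_k}` such that `{i₁, …, i_{k-1}}` (that is, `e`
with its maximum element removed) is an edge of `G₀`. -/
def liftHEdge {n : ℕ} (G₀ : Finset (Finset (Fin n))) (e : Finset (Fin n)) : Prop :=
  ∃ x ∈ e, (∀ y ∈ e, y ≤ x) ∧ e.erase x ∈ G₀

/-- let `k ≥ 3` and let `𝒢₀` be a `(k-1)`-uniform hypergraph on `{1, …, n}` with
no complete and no empty `(k-1)`-partite subgraph with parts of size `m`.  Then the `k`-uniform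
hypergraph `𝒢` whose edges are the `k`-sets `i₁ < ⋯ < i_k` with `{i₁, …, i_{k-1}}` an edge of
`𝒢₀` contains no complete and no empty `k`-partite subgraph with parts of size `m`. -/
theorem stmt_16 (k n m : ℕ) (hk : 3 ≤ k) (hm : 0 < m)
    (G₀ : Finset (Finset (Fin n))) (hG₀ : ∀ e ∈ G₀, e.card = k - 1)
    (hpart : ¬ ∃ S : Fin (k - 1) → Finset (Fin n),
      (∀ i j, i ≠ j → Disjoint (S i) (S j)) ∧ (∀ i, (S i).card = m) ∧
      ((∀ g : Fin (k - 1) → Fin n, (∀ i, g i ∈ S i) →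
          Finset.image g Finset.univ ∈ G₀) ∨
       (∀ g : Fin (k - 1) → Fin n, (∀ i, g i ∈ S i) →
          Finset.image g Finset.univ ∉ G₀))) :
    ¬ ∃ S : Fin k → Finset (Fin n),
      (∀ i j, i ≠ j → Disjoint (S i) (S j)) ∧ (∀ i, (S i).card = m) ∧
      ((∀ g : Fin k → Fin n, (∀ i, g i ∈ S i) →
          liftHEdge G₀ (Finset.image g Finset.univ)) ∨
       (∀ g : Fin k → Fin n, (∀ i, g i ∈ S i) →
          ¬ liftHEdge G₀ (Finset.image g Finset.univ))) := by
  rintro ⟨S, hdisj, hcard, hS⟩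
  apply hpart
  have hk1 : k - 1 + 1 = k := by omega
  have h0 : 0 < k := by omega
  set T := Finset.univ.biUnion S with hT
  have hTne : T.Nonempty := by
    have h1 : (S ⟨0, h0⟩).Nonempty := Finset.card_pos.mp (by rw [hcard]; exact hm)
    obtain ⟨v, hv⟩ := h1
    exact ⟨v, Finset.mem_biUnion.mpr ⟨⟨0, h0⟩, Finset.mem_univ _, hv⟩⟩
  set v := T.max' hTne with hv
  have hvmem := T.max'_mem hTne
  obtain ⟨j, -, hj⟩ := Finset.mem_biUnion.mp hvmem
  have hle : ∀ (i : Fin k) (y : Fin n), y ∈ S i → y ≤ v := fun i y hy =>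
    Finset.le_max' _ _ (Finset.mem_biUnion.mpr ⟨i, Finset.mem_univ _, hy⟩)
  set J : Fin (k - 1 + 1) := Fin.cast hk1.symm j with hJ
  set S' : Fin (k - 1) → Finset (Fin n) := fun i => S (Fin.cast hk1 (J.succAbove i)) with hS'
  have hcastinj : Function.Injective (Fin.cast hk1) := Fin.cast_injective hk1
  have hcastinj' : Function.Injective (Fin.cast hk1.symm) := Fin.cast_injective hk1.symm
  have hnej : ∀ i : Fin (k - 1), Fin.cast hk1 (J.succAbove i) ≠ j := by
    intro i h
    have : J.succAbove i = J := by
      apply hcastinj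
      rw [h]; ext; simp [hJ]
    exact (Fin.succAbove_ne J i) this
  have key : ∀ g' : Fin (k - 1) → Fin n, (∀ i, g' i ∈ S' i) →
      ∃ g : Fin k → Fin n, (∀ i, g i ∈ S i) ∧
        Finset.image g Finset.univ = insert v (Finset.image g' Finset.univ) ∧
        v ∉ Finset.image g' Finset.univ := by
    intro g' hg'
    refine ⟨fun i => (J.insertNth v g' : Fin (k - 1 + 1) → Fin n) (Fin.cast hk1.symm i),
      ?_, ?_, ?_⟩
    · intro i
      show (J.insertNth v g' : Fin (k - 1 + 1) → Fin n) (Fin.cast hk1.symm i) ∈ S i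
      by_cases hi : Fin.cast hk1.symm i = J
      · have hij : i = j := by apply hcastinj'; rw [hi]
        rw [hi, Fin.insertNth_apply_same, hij]
        exact hj
      · obtain ⟨i', hi'⟩ := Fin.exists_succAbove_eq hi
        rw [← hi', Fin.insertNth_apply_succAbove]
        have hci : Fin.cast hk1 (J.succAbove i') = i := hcastinj' hi'
        have h2 := hg' i'
        rw [hS'] at h2
        simpa [hci] using h2
    · ext x
      simp only [Finset.mem_image, Finset.mem_univ, true_and, Finset.mem_insert]
      constructor
      · rintro ⟨i, rfl⟩
        show (J.insertNth v g' : Fin (k - 1 + 1) → Fin n) (Fin.cast hk1.symm i) = v ∨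
          ∃ a, g' a = (J.insertNth v g' : Fin (k - 1 + 1) → Fin n) (Fin.cast hk1.symm i)
        by_cases hi : Fin.cast hk1.symm i = J
        · left; rw [hi, Fin.insertNth_apply_same]
        · obtain ⟨i', hi'⟩ := Fin.exists_succAbove_eq hi
          right; exact ⟨i', by rw [← hi', Fin.insertNth_apply_succAbove]⟩
      · rintro (rfl | ⟨i', rfl⟩)
        · refine ⟨j, ?_⟩
          show (J.insertNth v g' : Fin (k - 1 + 1) → Fin n) (Fin.cast hk1.symm j) = _
          have : Fin.cast hk1.symm j = J := rfl
          rw [this, Fin.insertNth_apply_same]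
        · refine ⟨Fin.cast hk1 (J.succAbove i'), ?_⟩
          show (J.insertNth v g' : Fin (k - 1 + 1) → Fin n)
            (Fin.cast hk1.symm (Fin.cast hk1 (J.succAbove i'))) = _
          have : Fin.cast hk1.symm (Fin.cast hk1 (J.succAbove i')) = J.succAbove i' := rfl
          rw [this, Fin.insertNth_apply_succAbove]
    · intro hvmem'
      obtain ⟨i', -, hi'⟩ := Finset.mem_image.mp hvmem'
      have h1 : v ∈ S' i' := hi' ▸ hg' i'
      exact Finset.disjoint_left.mp (hdisj _ _ (hnej i')) h1 hj
  refine ⟨S', fun i i' hii' => hdisj _ _ ?_, fun i => hcard _, ?_⟩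
  · intro h
    exact hii' (Fin.succAbove_right_injective (hcastinj h))
  · rcases hS with h | h
    · left
      intro g' hg'
      obtain ⟨g, hgmem, himg, hnv⟩ := key g' hg'
      have hl := h g hgmem
      rw [himg] at hl
      obtain ⟨x, hx, hxmax, hxE⟩ := hl
      have hxv : x = v := by
        refine le_antisymm ?_ (hxmax v (Finset.mem_insert_self _ _))
        rcases Finset.mem_insert.mp hx with rfl | hx'
        · exact le_refl _
        · obtain ⟨i', -, hi'⟩ := Finset.mem_image.mp hx'
          exact hi' ▸ hle _ _ (hg' i')
      rw [hxv, Finset.erase_insert hnv] at hxE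
      exact hxE
    · right
      intro g' hg' hg'E
      obtain ⟨g, hgmem, himg, hnv⟩ := key g' hg'
      apply h g hgmem
      rw [himg]
      refine ⟨v, Finset.mem_insert_self _ _, ?_, ?_⟩
      · intro y hy
        rcases Finset.mem_insert.mp hy with rfl | hy'
        · exact le_refl _
        · obtain ⟨i', -, hi'⟩ := Finset.mem_image.mp hy'
          exact hi' ▸ hle _ _ (hg' i')
      · rwa [Finset.erase_insert hnv]
end
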